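/- arXiv:1912.11845 — 10 statements merged into one kernel-verified Lean document; each statement's English description precedes it below -/
import Mathlib

section
/- Let c ∈ ℚ[[x]] be the Catalan generating function and set f = -x·c³. Then f∘f = x and c·(c∘f) = 1; that is, the Riordan array (c(x), -x·c(x)³) is a Riordan involution. -/
open PowerSeries Finset

/-- Substitution `f ∘ h` of a power series `h` (intended to have zero constant
term) into a power series `f`: the coefficient of `xⁿ` is
`∑_{k=0}^{n} f_k · [xⁿ](hᵏ)`. -/
noncomputable def PowerSeries.comp {R : Type*} [CommSemiring R]
    (f h : PowerSeries R) : PowerSeries R :=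
  PowerSeries.mk fun n => ∑ k ∈ Finset.range (n + 1),
    (PowerSeries.coeff k f) * (PowerSeries.coeff n (h ^ k))

section Aux

variable {h : PowerSeries ℚ}

lemma aux_coeff_pow_eq_zero (h0 : constantCoeff h = 0) {n k : ℕ} (hnk : n < k) :
    coeff n (h ^ k) = 0 :=
  X_pow_dvd_iff.mp (pow_dvd_pow_of_dvd (X_dvd_iff.mpr h0) k) n hnk

lemma aux_coeff_eval₂ (h0 : constantCoeff h = 0) (p : Polynomial ℚ) (n : ℕ) :
    coeff n (p.eval₂ C h) = ∑ i ∈ range (n + 1), p.coeff i * coeff n (h ^ i) := by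
  have hdeg : p.natDegree < max (p.natDegree + 1) (n + 1) :=
    lt_of_lt_of_le (Nat.lt_succ_self _) (le_max_left _ _)
  rw [Polynomial.eval₂_eq_sum_range' C hdeg h, map_sum]
  calc (∑ i ∈ range (max (p.natDegree + 1) (n + 1)), coeff n (C (p.coeff i) * h ^ i))
      = ∑ i ∈ range (max (p.natDegree + 1) (n + 1)), p.coeff i * coeff n (h ^ i) :=
        Finset.sum_congr rfl fun i _ => coeff_C_mul _ _ _
    _ = ∑ i ∈ range (n + 1), p.coeff i * coeff n (h ^ i) :=
        (Finset.sum_subset (range_subset_range.mpr (le_max_right _ _)) fun i _ hi => by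
          rw [aux_coeff_pow_eq_zero h0 (by simpa using hi), mul_zero]).symm

lemma aux_coeff_comp (h0 : constantCoeff h = 0) (f : PowerSeries ℚ) {n m : ℕ} (hm : n < m) :
    coeff n (f.comp h) = coeff n ((trunc m f).eval₂ C h) := by
  rw [eval₂_trunc_eq_sum_range, map_sum]
  rw [PowerSeries.comp, coeff_mk]
  calc (∑ k ∈ range (n + 1), coeff k f * coeff n (h ^ k))
      = ∑ k ∈ range m, coeff k f * coeff n (h ^ k) :=
        Finset.sum_subset (range_subset_range.mpr hm) fun i _ hi => by
          rw [aux_coeff_pow_eq_zero h0 (by simpa using hi), mul_zero]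
    _ = ∑ k ∈ range m, coeff n (C (coeff k f) * h ^ k) :=
        Finset.sum_congr rfl fun i _ => (coeff_C_mul _ _ _).symm

lemma aux_comp_mul (h0 : constantCoeff h = 0) (f g : PowerSeries ℚ) :
    (f * g).comp h = f.comp h * g.comp h := by
  ext n
  rw [aux_coeff_comp h0 (f * g) (Nat.lt_succ_self n), PowerSeries.coeff_mul]
  have hl : ∀ p ∈ antidiagonal n,
      coeff p.1 (f.comp h) * coeff p.2 (g.comp h)
        = coeff p.1 ((trunc (n + 1) f).eval₂ C h)
          * coeff p.2 ((trunc (n + 1) g).eval₂ C h) := by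
    intro p hp
    rw [Finset.HasAntidiagonal.mem_antidiagonal] at hp
    rw [aux_coeff_comp h0 f (Nat.lt_succ_of_le (hp ▸ Nat.le_add_right p.1 p.2)),
      aux_coeff_comp h0 g (Nat.lt_succ_of_le (hp ▸ Nat.le_add_left p.2 p.1))]
  rw [Finset.sum_congr rfl hl, ← PowerSeries.coeff_mul, ← Polynomial.eval₂_mul,
    aux_coeff_eval₂ h0, aux_coeff_eval₂ h0]
  refine Finset.sum_congr rfl fun i hi => ?_
  rw [mem_range] at hi
  congr 1
  rw [Polynomial.coeff_mul, coeff_trunc, if_pos hi, PowerSeries.coeff_mul]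
  refine Finset.sum_congr rfl fun q hq => ?_
  rw [Finset.HasAntidiagonal.mem_antidiagonal] at hq
  have hq1 : q.1 < n + 1 := Nat.lt_succ_of_le (le_trans (hq ▸ Nat.le_add_right q.1 q.2) (Nat.lt_succ_iff.mp hi))
  have hq2 : q.2 < n + 1 := Nat.lt_succ_of_le (le_trans (hq ▸ Nat.le_add_left q.2 q.1) (Nat.lt_succ_iff.mp hi))
  rw [coeff_trunc, if_pos hq1, coeff_trunc, if_pos hq2]

lemma aux_comp_one : (1 : PowerSeries ℚ).comp h = 1 := by
  ext n
  rw [PowerSeries.comp, coeff_mk]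
  rw [Finset.sum_eq_single 0]
  · simp
  · intro k _ hk
    simp [PowerSeries.coeff_one, hk]
  · simp

lemma aux_comp_X (h0 : constantCoeff h = 0) : (X : PowerSeries ℚ).comp h = h := by
  ext n
  rw [PowerSeries.comp, coeff_mk]
  rw [Finset.sum_eq_single 1]
  · cases n with
    | zero => simp [coeff_zero_eq_constantCoeff, h0]
    | succ m => simp
  · intro k _ hk
    simp [PowerSeries.coeff_X, hk]
  · intro hmem
    have : n = 0 := by
      by_contra hne
      exact hmem (mem_range.mpr (Nat.lt_succ_of_le (Nat.one_le_iff_ne_zero.mpr hne)))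
    subst this
    simp [coeff_zero_eq_constantCoeff, h0]

lemma aux_comp_add (f g : PowerSeries ℚ) : (f + g).comp h = f.comp h + g.comp h := by
  ext n
  simp [PowerSeries.comp, add_mul, Finset.sum_add_distrib]

lemma aux_comp_neg (f : PowerSeries ℚ) : (-f).comp h = -(f.comp h) := by
  ext n
  simp [PowerSeries.comp, Finset.sum_neg_distrib]

lemma aux_comp_pow (h0 : constantCoeff h = 0) (f : PowerSeries ℚ) (k : ℕ) :
    (f ^ k).comp h = (f.comp h) ^ k := by
  induction k with
  | zero => simpa using aux_comp_one (h := h)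
  | succ m ih => rw [pow_succ, aux_comp_mul h0, ih, pow_succ]

lemma aux_constantCoeff_comp (f : PowerSeries ℚ) :
    constantCoeff (f.comp h) = constantCoeff f := by
  rw [← coeff_zero_eq_constantCoeff, PowerSeries.comp, coeff_mk]
  simp [coeff_zero_eq_constantCoeff]

end Aux

/-- The Riordan array `(c(x), -x·c(x)³)` is a Riordan involution, where `c` is the
Catalan generating function. -/
theorem stmt0 (c : PowerSeries ℚ) (hc0 : PowerSeries.constantCoeff c = 1)
    (hc : c = 1 + PowerSeries.X * c ^ 2) :
    PowerSeries.comp (-(PowerSeries.X * c ^ 3)) (-(PowerSeries.X * c ^ 3)) = PowerSeries.X ∧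
      c * PowerSeries.comp c (-(PowerSeries.X * c ^ 3)) = 1 := by
  set f : PowerSeries ℚ := -(X * c ^ 3) with hf
  have hf0 : constantCoeff f = 0 := by simp [hf]
  set u : PowerSeries ℚ := 1 - X * c with hu
  have hcu : c * u = 1 := by rw [hu]; linear_combination hc
  set w : PowerSeries ℚ := PowerSeries.comp c f with hwdef
  have hw0 : constantCoeff w = 1 := by
    rw [hwdef, aux_constantCoeff_comp, hc0]
  have hwfe : w = 1 + f * w ^ 2 := by
    conv_lhs => rw [hwdef]
    conv_lhs => rw [hc]
    rw [aux_comp_add, aux_comp_one, aux_comp_mul hf0, aux_comp_X hf0, aux_comp_pow hf0, ← hwdef]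
  have huf : u = 1 + f * u ^ 2 := by
    linear_combination (-(u ^ 2)) * hf + hu + (X * c * (c * u + 1)) * hcu
  have hz : (w - u) * (1 - f * (w + u)) = 0 := by
    linear_combination hwfe - huf
  have hne : (1 - f * (w + u)) ≠ 0 := by
    intro hcontra
    have := congrArg (constantCoeff) hcontra
    simp [hf0] at this
  have hw : w = u := by
    rcases mul_eq_zero.mp hz with h1 | h2
    · exact sub_eq_zero.mp h1
    · exact absurd h2 hne
  constructor
  · show PowerSeries.comp f f = X
    rw [hf]
    rw [aux_comp_neg, aux_comp_mul hf0, aux_comp_X hf0, aux_comp_pow hf0, ← hwdef, hw]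
    linear_combination (-(u ^ 3)) * hf + (X * ((c * u) ^ 2 + c * u + 1)) * hcu
  · show c * w = 1
    rw [hw]; exact hcu
end

section
/- In ℚ[[x]] one has c∘( -x(1-x)·(c∘(x - x²))³ ) = 1 - x, i.e. substituting -x(1-x)·c(x(1-x))³ into the Catalan generating function c yields 1 - x. -/
open PowerSeries Finset

namespace CatalanAux

lemma coeff_pow_eq_zero {h : PowerSeries ℚ} (hh : PowerSeries.constantCoeff h = 0)
    {n k : ℕ} (hnk : n < k) : PowerSeries.coeff n (h ^ k) = 0 := by
  have hX : (PowerSeries.X : PowerSeries ℚ) ∣ h := PowerSeries.X_dvd_iff.mpr hh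
  have : (PowerSeries.X : PowerSeries ℚ) ^ k ∣ h ^ k := pow_dvd_pow_of_dvd hX k
  exact (PowerSeries.X_pow_dvd_iff.mp this) n hnk

lemma coeff_eval₂ {h : PowerSeries ℚ} (hh : PowerSeries.constantCoeff h = 0)
    (n : ℕ) (P : Polynomial ℚ) :
    PowerSeries.coeff n (Polynomial.eval₂ (PowerSeries.C) h P) =
      ∑ k ∈ Finset.range (n + 1), P.coeff k * PowerSeries.coeff n (h ^ k) := by
  induction P using Polynomial.induction_on' with
  | add p q hp hq =>
      simp only [Polynomial.eval₂_add, map_add, hp, hq, Polynomial.coeff_add, add_mul,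
        Finset.sum_add_distrib]
  | monomial m a =>
      rw [Polynomial.eval₂_monomial]
      simp only [Polynomial.coeff_monomial]
      rw [PowerSeries.coeff_C_mul]
      simp only [ite_mul, zero_mul]; rw [Finset.sum_ite_eq]
      simp only [Finset.mem_range, zero_mul]
      by_cases hm : m < n + 1
      · simp [hm]
      · simp only [hm, if_false]
        rw [coeff_pow_eq_zero hh (by omega), mul_zero]

lemma coeff_comp_le {h : PowerSeries ℚ} (hh : PowerSeries.constantCoeff h = 0)
    (f : PowerSeries ℚ) {m n : ℕ} (hmn : m ≤ n) :
    PowerSeries.coeff m (PowerSeries.comp f h) =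
      PowerSeries.coeff m (Polynomial.eval₂ (PowerSeries.C) h
        (PowerSeries.trunc (n + 1) f)) := by
  rw [coeff_eval₂ hh, PowerSeries.comp, PowerSeries.coeff_mk]
  refine Finset.sum_congr rfl fun k hk => ?_
  rw [Finset.mem_range] at hk
  rw [PowerSeries.coeff_trunc, if_pos (by omega)]

lemma coeff_mul_congr {A A' B B' : PowerSeries ℚ} {n : ℕ}
    (hA : ∀ i ≤ n, PowerSeries.coeff i A = PowerSeries.coeff i A')
    (hB : ∀ i ≤ n, PowerSeries.coeff i B = PowerSeries.coeff i B') :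
    PowerSeries.coeff n (A * B) = PowerSeries.coeff n (A' * B') := by
  rw [PowerSeries.coeff_mul, PowerSeries.coeff_mul]
  refine Finset.sum_congr rfl fun p hp => ?_
  rw [Finset.HasAntidiagonal.mem_antidiagonal] at hp
  rw [hA p.1 (by omega), hB p.2 (by omega)]

lemma comp_one {h : PowerSeries ℚ} :
    PowerSeries.comp 1 h = 1 := by
  ext n
  rw [PowerSeries.comp, PowerSeries.coeff_mk]
  simp only [PowerSeries.coeff_one]
  simp only [ite_mul, zero_mul]; rw [Finset.sum_ite_eq']
  simp

lemma comp_X {h : PowerSeries ℚ} (hh : PowerSeries.constantCoeff h = 0) :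
    PowerSeries.comp PowerSeries.X h = h := by
  ext n
  rw [PowerSeries.comp, PowerSeries.coeff_mk]
  simp only [PowerSeries.coeff_X]
  simp only [ite_mul, zero_mul]; rw [Finset.sum_ite_eq']
  simp only [Finset.mem_range, pow_one]
  by_cases hn : 1 < n + 1
  · simp [hn]
  · have hn0 : n = 0 := by omega
    subst hn0
    simp [hh]

lemma comp_add {f g h : PowerSeries ℚ} :
    PowerSeries.comp (f + g) h = PowerSeries.comp f h + PowerSeries.comp g h := by
  ext n
  simp [PowerSeries.comp, add_mul, Finset.sum_add_distrib]

lemma comp_mul {f g h : PowerSeries ℚ} (hh : PowerSeries.constantCoeff h = 0) :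
    PowerSeries.comp (f * g) h = PowerSeries.comp f h * PowerSeries.comp g h := by
  ext n
  have key : ∀ k ≤ n, (PowerSeries.trunc (n + 1) (f * g)).coeff k =
      ((PowerSeries.trunc (n + 1) f) * (PowerSeries.trunc (n + 1) g)).coeff k := by
    intro k hk
    rw [PowerSeries.coeff_trunc, if_pos (by omega), Polynomial.coeff_mul,
      PowerSeries.coeff_mul]
    refine Finset.sum_congr rfl fun p hp => ?_
    rw [Finset.HasAntidiagonal.mem_antidiagonal] at hp
    rw [PowerSeries.coeff_trunc, if_pos (by omega), PowerSeries.coeff_trunc,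
      if_pos (by omega)]
  calc PowerSeries.coeff n (PowerSeries.comp (f * g) h)
      = PowerSeries.coeff n (Polynomial.eval₂ (PowerSeries.C) h
          (PowerSeries.trunc (n + 1) (f * g))) := coeff_comp_le hh _ le_rfl
    _ = ∑ k ∈ Finset.range (n + 1), (PowerSeries.trunc (n + 1) (f * g)).coeff k *
          PowerSeries.coeff n (h ^ k) := coeff_eval₂ hh n _
    _ = ∑ k ∈ Finset.range (n + 1),
          ((PowerSeries.trunc (n + 1) f) * (PowerSeries.trunc (n + 1) g)).coeff k *
          PowerSeries.coeff n (h ^ k) := by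
        refine Finset.sum_congr rfl fun k hk => ?_
        rw [Finset.mem_range] at hk
        rw [key k (by omega)]
    _ = PowerSeries.coeff n (Polynomial.eval₂ (PowerSeries.C) h
          ((PowerSeries.trunc (n + 1) f) * (PowerSeries.trunc (n + 1) g))) :=
        (coeff_eval₂ hh n _).symm
    _ = PowerSeries.coeff n (Polynomial.eval₂ (PowerSeries.C) h
          (PowerSeries.trunc (n + 1) f) * Polynomial.eval₂ (PowerSeries.C) h
          (PowerSeries.trunc (n + 1) g)) := by rw [Polynomial.eval₂_mul]
    _ = PowerSeries.coeff n (PowerSeries.comp f h * PowerSeries.comp g h) :=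
        coeff_mul_congr (fun i hi => (coeff_comp_le hh f hi).symm)
          (fun i hi => (coeff_comp_le hh g hi).symm)

lemma eq_zero_of_self (d q : PowerSeries ℚ) (hd : d = PowerSeries.X * q * d) :
    d = 0 := by
  have hdvd : ∀ n : ℕ, (PowerSeries.X : PowerSeries ℚ) ^ n ∣ d := by
    intro n
    induction n with
    | zero => simpa using one_dvd d
    | succ n ih =>
        obtain ⟨e, he⟩ := ih
        exact ⟨q * e, by rw [hd, he]; ring⟩
  ext n
  rw [map_zero]
  exact (PowerSeries.X_pow_dvd_iff.mp (hdvd (n + 1))) n (by omega)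

lemma uniq (A B y₁ y₂ : PowerSeries ℚ)
    (h1 : y₁ = A + PowerSeries.X * B * y₁ ^ 2)
    (h2 : y₂ = A + PowerSeries.X * B * y₂ ^ 2) : y₁ = y₂ := by
  have hd : y₁ - y₂ = PowerSeries.X * (B * (y₁ + y₂)) * (y₁ - y₂) := by
    conv_lhs => rw [h1, h2]
    ring
  have := eq_zero_of_self (y₁ - y₂) (B * (y₁ + y₂)) hd
  linear_combination this

end CatalanAux

open CatalanAux in
/-- Substituting `-x(1-x)·c(x(1-x))³` into the Catalan generating function `c`
yields `1 - x`. -/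
theorem stmt2 (c : PowerSeries ℚ) (hc0 : PowerSeries.constantCoeff c = 1)
    (hc : c = 1 + PowerSeries.X * c ^ 2) :
    PowerSeries.comp c
        (-(PowerSeries.X * (1 - PowerSeries.X)) *
          (PowerSeries.comp c (PowerSeries.X - PowerSeries.X ^ 2)) ^ 3) =
      1 - PowerSeries.X := by
  set X : PowerSeries ℚ := PowerSeries.X with hX
  -- step 1: u := c ∘ (X - X²) satisfies u = 1 + (X - X²) u²
  have hh1 : PowerSeries.constantCoeff (X - X ^ 2) = 0 := by
    simp [hX]
  set u : PowerSeries ℚ := PowerSeries.comp c (X - X ^ 2) with hu_def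
  have hu : u = 1 + (X - X ^ 2) * u ^ 2 := by
    rw [hu_def]
    conv_lhs => rw [hc]
    rw [comp_add, comp_one, sq c, comp_mul hh1, comp_mul hh1, comp_X hh1]
    ring
  -- step 2: (1 - X) * u = 1
  have hv : (1 - X) * u = 1 := by
    apply uniq (1 - X) 1
    · linear_combination (1 - X) * hu
    · ring
  -- step 3: the main composition
  have hh0 : PowerSeries.constantCoeff (-(X * (1 - X)) * u ^ 3) = 0 := by
    simp [hX]
  set g : PowerSeries ℚ := PowerSeries.comp c (-(X * (1 - X)) * u ^ 3) with hg_def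
  have hg : g = 1 + (-(X * (1 - X)) * u ^ 3) * g ^ 2 := by
    rw [hg_def]
    conv_lhs => rw [hc]
    rw [comp_add, comp_one, sq c, comp_mul hh0, comp_mul hh0, comp_X hh0]
    ring
  show g = 1 - X
  apply uniq 1 (-((1 - X) * u ^ 3))
  · linear_combination hg
  · linear_combination (X * (((1 - X) * u) ^ 2 + (1 - X) * u + 1)) * hv
end

section
/- Let c ∈ ℚ[[x]] be the Catalan generating function and set f = -x·c³. Then f∘f = x and c²·(c²∘f) = 1; that is, the Riordan array (c(x)², -x·c(x)³) is a Riordan involution. -/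
open PowerSeries Finset

namespace RiordanAux

lemma coeff_comp (f h : PowerSeries ℚ) (n : ℕ) :
    coeff n (f.comp h) = ∑ k ∈ range (n + 1), coeff k f * coeff n (h ^ k) := by
  simp [PowerSeries.comp]

lemma coeff_pow_eq_zero {h : PowerSeries ℚ} (hh : constantCoeff h = 0)
    {n k : ℕ} (hnk : n < k) : coeff n (h ^ k) = 0 := by
  have hX : (X : PowerSeries ℚ) ^ k ∣ h ^ k :=
    pow_dvd_pow_of_dvd (X_dvd_iff.mpr hh) k
  exact X_pow_dvd_iff.mp hX n hnk

lemma comp_one (h : PowerSeries ℚ) : (1 : PowerSeries ℚ).comp h = 1 := by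
  ext n
  rw [coeff_comp]
  rw [Finset.sum_eq_single 0]
  · simp
  · intro k _ hk
    simp [coeff_one, hk]
  · intro habs
    exact absurd (Finset.mem_range.mpr (Nat.succ_pos n)) habs

lemma comp_X {h : PowerSeries ℚ} (hh : constantCoeff h = 0) :
    (X : PowerSeries ℚ).comp h = h := by
  ext n
  rw [coeff_comp]
  rw [Finset.sum_eq_single 1]
  · simp
  · intro k _ hk
    simp [coeff_X, hk]
  · intro h1
    have hn : n = 0 := by
      simp only [Finset.mem_range] at h1; omega
    subst hn
    simp [coeff_X, pow_one, coeff_zero_eq_constantCoeff_apply, hh]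

lemma comp_add (f g h : PowerSeries ℚ) :
    (f + g).comp h = f.comp h + g.comp h := by
  ext n
  simp [coeff_comp, add_mul, Finset.sum_add_distrib]

lemma comp_sub (f g h : PowerSeries ℚ) :
    (f - g).comp h = f.comp h - g.comp h := by
  ext n
  simp [coeff_comp, sub_mul, Finset.sum_sub_distrib]

lemma comp_mul {h : PowerSeries ℚ} (hh : constantCoeff h = 0) (f g : PowerSeries ℚ) :
    (f * g).comp h = f.comp h * g.comp h := by
  ext n
  set F : ℕ × ℕ → ℚ := fun p => coeff p.1 f * coeff p.2 g * coeff n (h ^ (p.1 + p.2))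
    with hF
  have key : ((range (n + 1)) ×ˢ (range (n + 1))).filter (fun p => p.1 + p.2 ≤ n)
      = (range (n + 1)).biUnion (fun k => Finset.HasAntidiagonal.antidiagonal k) := by
    ext p
    simp only [Finset.mem_filter, Finset.mem_product, Finset.mem_range,
      Finset.mem_biUnion, Finset.HasAntidiagonal.mem_antidiagonal]
    constructor
    · rintro ⟨⟨_, _⟩, hle⟩
      exact ⟨p.1 + p.2, by omega, rfl⟩
    · rintro ⟨k, hk, hpk⟩
      omega
  have hdisj : (↑(range (n + 1)) : Set ℕ).PairwiseDisjoint
      (fun k => Finset.HasAntidiagonal.antidiagonal k) := by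
    intro a _ b _ hab
    simp only [Function.onFun]
    rw [Finset.disjoint_left]
    intro q hqa hqb
    rw [Finset.HasAntidiagonal.mem_antidiagonal] at hqa hqb
    exact hab (hqa ▸ hqb ▸ rfl)
  have hL : coeff n ((f * g).comp h)
      = ∑ p ∈ ((range (n + 1)) ×ˢ (range (n + 1))).filter (fun p => p.1 + p.2 ≤ n), F p := by
    rw [coeff_comp, key, Finset.sum_biUnion hdisj]
    refine Finset.sum_congr rfl fun k hk => ?_
    rw [coeff_mul, Finset.sum_mul]
    refine Finset.sum_congr rfl fun q hq => ?_
    rw [hF]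
    simp only
    rw [Finset.HasAntidiagonal.mem_antidiagonal.mp hq]
  have hR : coeff n (f.comp h * g.comp h)
      = ∑ p ∈ (range (n + 1)) ×ˢ (range (n + 1)), F p := by
    rw [coeff_mul]
    have step1 : ∀ p ∈ Finset.HasAntidiagonal.antidiagonal n,
        coeff p.1 (f.comp h) * coeff p.2 (g.comp h)
        = (∑ i ∈ range (n + 1), coeff i f * coeff p.1 (h ^ i))
          * (∑ j ∈ range (n + 1), coeff j g * coeff p.2 (h ^ j)) := by
      intro p hp
      have hp' := Finset.HasAntidiagonal.mem_antidiagonal.mp hp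
      rw [coeff_comp, coeff_comp]
      congr 1
      · refine Finset.sum_subset (Finset.range_subset_range.mpr (by omega)) fun i _ hi => ?_
        have : p.1 < i := by simp only [Finset.mem_range] at hi; omega
        rw [coeff_pow_eq_zero hh this, mul_zero]
      · refine Finset.sum_subset (Finset.range_subset_range.mpr (by omega)) fun j _ hj => ?_
        have : p.2 < j := by simp only [Finset.mem_range] at hj; omega
        rw [coeff_pow_eq_zero hh this, mul_zero]
    rw [Finset.sum_congr rfl step1]
    have step2 : ∀ p : ℕ × ℕ,
        (∑ i ∈ range (n + 1), coeff i f * coeff p.1 (h ^ i))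
          * (∑ j ∈ range (n + 1), coeff j g * coeff p.2 (h ^ j))
        = ∑ i ∈ range (n + 1), ∑ j ∈ range (n + 1),
            (coeff i f * coeff j g) * (coeff p.1 (h ^ i) * coeff p.2 (h ^ j)) := by
      intro p
      rw [Finset.sum_mul_sum]
      exact Finset.sum_congr rfl fun i _ => Finset.sum_congr rfl fun j _ => by ring
    rw [Finset.sum_congr rfl fun p _ => step2 p, Finset.sum_product]
    rw [Finset.sum_comm]
    refine Finset.sum_congr rfl fun i _ => ?_
    rw [Finset.sum_comm]
    refine Finset.sum_congr rfl fun j _ => ?_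
    rw [← Finset.mul_sum, ← coeff_mul, ← pow_add]
  rw [hL, hR, Finset.sum_filter_of_ne]
  intro p _ hFp
  by_contra hgt
  apply hFp
  rw [hF]
  simp only
  rw [coeff_pow_eq_zero hh (by omega), mul_zero]

lemma comp_pow {h : PowerSeries ℚ} (hh : constantCoeff h = 0) (f : PowerSeries ℚ) :
    ∀ m : ℕ, (f ^ m).comp h = (f.comp h) ^ m := by
  intro m
  induction m with
  | zero => simpa using comp_one h
  | succ m ih => rw [pow_succ, comp_mul hh, ih, pow_succ]

lemma unique_sol {f g₁ g₂ : PowerSeries ℚ} (hf : constantCoeff f = 0)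
    (h1 : g₁ = 1 + f * g₁ ^ 2) (h2 : g₂ = 1 + f * g₂ ^ 2) : g₁ = g₂ := by
  have hz : (g₁ - g₂) * (1 - f * (g₁ + g₂)) = 0 := by linear_combination h1 - h2
  rcases mul_eq_zero.mp hz with h | h
  · exact sub_eq_zero.mp h
  · exfalso
    have := congrArg (constantCoeff) h
    simp [hf] at this

end RiordanAux

/-- The Riordan array `(c(x)², -x·c(x)³)` is a Riordan involution, where `c` is
the Catalan generating function. -/
theorem stmt4 (c : PowerSeries ℚ) (hc0 : PowerSeries.constantCoeff c = 1)
    (hc : c = 1 + PowerSeries.X * c ^ 2) :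
    PowerSeries.comp (-(PowerSeries.X * c ^ 3)) (-(PowerSeries.X * c ^ 3)) = PowerSeries.X ∧
      c ^ 2 * PowerSeries.comp (c ^ 2) (-(PowerSeries.X * c ^ 3)) = 1 := by
  open RiordanAux in
  -- rewrite f = -(X c³) as c - c²
  have hf : -(PowerSeries.X * c ^ 3) = c - c ^ 2 := by linear_combination c * hc
  set f : PowerSeries ℚ := -(PowerSeries.X * c ^ 3) with hfdef
  have hh : constantCoeff f = 0 := by
    simp [hfdef, constantCoeff_X]
  set D : PowerSeries ℚ := c.comp f with hD
  -- D satisfies the Catalan equation with f in place of X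
  have hDeq : D = 1 + f * D ^ 2 := by
    calc D = ((1 : PowerSeries ℚ) + X * c ^ 2).comp f := by rw [hD, ← hc]
    _ = (1 : PowerSeries ℚ).comp f + (X : PowerSeries ℚ).comp f * (c ^ 2).comp f := by
        rw [comp_add, comp_mul hh]
    _ = 1 + f * D ^ 2 := by rw [comp_one, comp_X hh, comp_pow hh]
  -- c⁻¹ satisfies the same equation
  have hcne : constantCoeff c ≠ 0 := by rw [hc0]; exact one_ne_zero
  have hcw : c * c⁻¹ = 1 := PowerSeries.mul_inv_cancel c hcne
  have hweq : c⁻¹ = 1 + f * (c⁻¹) ^ 2 := by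
    rw [hf]
    linear_combination (c * c⁻¹ + 1 - c⁻¹) * hcw
  have hDw : D = c⁻¹ := unique_sol hh hDeq hweq
  have hcD : c * D = 1 := by rw [hDw]; exact hcw
  constructor
  · -- f ∘ f = X
    have e1 : f.comp f = (c - c ^ 2).comp f := by rw [← hf]
    have : f.comp f = D - D ^ 2 := by
      rw [e1, comp_sub, comp_pow hh, ← hD]
    rw [this]
    linear_combination D ^ 2 * hc + (PowerSeries.X * (c * D + 1) - D) * hcD
  · rw [comp_pow hh]
    linear_combination (c * D + 1) * hcD
end

section
/- For all natural numbers n and k with k ≤ n, the coefficient of xⁿ in c·(x·c³)^k equals (3k+1)/(n+2k+1) · C(2n+k, n-k) in ℚ, where C denotes the binomial coefficient. That is, the general term of the unsigned Riordan array (c(x), x·c(x)³) is (3k+1)/(n+2k+1)·C(2n+k, n-k). -/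
open PowerSeries Finset

/-- Auxiliary: target coefficient function. -/
def catF (n m : ℕ) : ℚ :=
  if m = 0 then (if n = 0 then 1 else 0)
  else m * ((2 * n + m).choose n) / (2 * n + m)

lemma catKey (n m : ℕ) :
    ((m : ℚ) + 1) * ((2 * n + m + 3).choose (n + 1)) / (2 * n + m + 3)
      = ((m : ℚ) * ((2 * n + m + 2).choose (n + 1)) + ((m : ℚ) + 2) * ((2 * n + m + 2).choose n))
          / (2 * n + m + 2) := by
  have hp : (2 * n + m + 3).choose (n + 1)
      = (2 * n + m + 2).choose n + (2 * n + m + 2).choose (n + 1) :=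
    Nat.choose_succ_succ (2 * n + m + 2) n
  have hpq : ((2 * n + m + 3).choose (n + 1) : ℚ)
      = ((2 * n + m + 2).choose n : ℚ) + ((2 * n + m + 2).choose (n + 1) : ℚ) := by
    exact_mod_cast hp
  have h1 : (2 * n + m + 2).choose (n + 1) * (n + 1)
      = (2 * n + m + 2).choose n * (n + m + 2) := by
    rw [Nat.choose_succ_right_eq]
    congr 1
    omega
  have h1q : ((2 * n + m + 2).choose (n + 1) : ℚ) * (n + 1)
      = ((2 * n + m + 2).choose n : ℚ) * (n + m + 2) := by exact_mod_cast h1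
  rw [div_eq_div_iff (by positivity) (by positivity)]
  linear_combination ((m : ℚ) + 1) * (2 * (n : ℚ) + m + 2) * hpq + 2 * h1q

lemma catF_step (n m : ℕ) : catF (n + 1) (m + 1) = catF (n + 1) m + catF n (m + 2) := by
  rcases m with _ | m
  · simp only [catF, if_neg (by omega : ¬(1 = 0)), if_neg (by omega : ¬(n + 1 = 0)),
      if_neg (by omega : ¬(2 = 0))]
    have key := catKey n 0
    rw [show 2 * (n + 1) + 1 = 2 * n + 0 + 3 from by omega,
      show 2 * n + 2 = 2 * n + 0 + 2 from by omega]
    push_cast at key ⊢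
    linear_combination key
  · simp only [catF, if_neg (by omega : ¬(m + 1 + 1 = 0)), if_neg (by omega : ¬(m + 1 = 0)),
      if_neg (by omega : ¬(m + 1 + 2 = 0))]
    have key := catKey n (m + 1)
    rw [show 2 * (n + 1) + (m + 1 + 1) = 2 * n + (m + 1) + 3 from by omega,
      show 2 * (n + 1) + (m + 1) = 2 * n + (m + 1) + 2 from by omega,
      show 2 * n + (m + 1 + 2) = 2 * n + (m + 1) + 2 from by omega]
    push_cast at key ⊢
    linear_combination key

lemma catCoeff (c : PowerSeries ℚ) (hc0 : PowerSeries.constantCoeff c = 1)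
    (hc : c = 1 + PowerSeries.X * c ^ 2) :
    ∀ n m : ℕ, PowerSeries.coeff n (c ^ m) = catF n m := by
  intro n
  induction n with
  | zero =>
    intro m
    rw [coeff_zero_eq_constantCoeff, map_pow, hc0, one_pow]
    rcases m with _ | m
    · simp [catF]
    · simp only [catF, if_neg (by omega : ¬(m + 1 = 0)), Nat.choose_zero_right]
      have h : ((m : ℚ) + 1) ≠ 0 := by positivity
      push_cast
      field_simp
      ring
  | succ n ih =>
    intro m
    induction m with
    | zero =>
      simp [catF, PowerSeries.coeff_one]
    | succ m ihm =>
      have h2 : c ^ m * c = c ^ m * (1 + PowerSeries.X * c ^ 2) := by rw [← hc]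
      have step : c ^ (m + 1) = c ^ m + PowerSeries.X * c ^ (m + 2) := by
        rw [pow_succ, h2]; ring
      rw [step, map_add, PowerSeries.coeff_succ_X_mul, ihm, ih (m + 2)]
      exact (catF_step n m).symm

lemma catFin (r k : ℕ) :
    ((3 * (k : ℚ) + 1) * ((2 * r + 3 * k + 1).choose r)) / (2 * r + 3 * k + 1)
      = (3 * (k : ℚ) + 1) / ((r : ℚ) + 3 * k + 1) * ((2 * r + 3 * k).choose r) := by
  rcases r with _ | s
  · simp
  · have hp : (2 * (s + 1) + 3 * k + 1).choose (s + 1)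
        = (2 * (s + 1) + 3 * k).choose s + (2 * (s + 1) + 3 * k).choose (s + 1) := by
      rw [show 2 * (s + 1) + 3 * k + 1 = (2 * (s + 1) + 3 * k) + 1 from rfl]
      exact Nat.choose_succ_succ _ s
    have hpq : ((2 * (s + 1) + 3 * k + 1).choose (s + 1) : ℚ)
        = ((2 * (s + 1) + 3 * k).choose s : ℚ)
          + ((2 * (s + 1) + 3 * k).choose (s + 1) : ℚ) := by exact_mod_cast hp
    have h1 : (2 * (s + 1) + 3 * k).choose (s + 1) * (s + 1)
        = (2 * (s + 1) + 3 * k).choose s * (s + 3 * k + 2) := by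
      rw [Nat.choose_succ_right_eq]
      congr 1
      omega
    have h1q : ((2 * (s + 1) + 3 * k).choose (s + 1) : ℚ) * (s + 1)
        = ((2 * (s + 1) + 3 * k).choose s : ℚ) * (s + 3 * k + 2) := by exact_mod_cast h1
    push_cast
    rw [div_mul_eq_mul_div, div_eq_div_iff (by positivity) (by positivity)]
    linear_combination (3 * (k : ℚ) + 1) * ((s : ℚ) + 3 * k + 2) * hpq - (3 * (k : ℚ) + 1) * h1q

/-- The general term of the Riordan array `(c(x), x·c(x)³)` is
`(3k+1)/(n+2k+1)·C(2n+k, n-k)`, where `c` is the Catalan generating function. -/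
theorem stmt5 (c : PowerSeries ℚ) (hc0 : PowerSeries.constantCoeff c = 1)
    (hc : c = 1 + PowerSeries.X * c ^ 2) :
    ∀ n k : ℕ, k ≤ n →
      PowerSeries.coeff n (c * (PowerSeries.X * c ^ 3) ^ k) =
        (3 * (k : ℚ) + 1) / ((n : ℚ) + 2 * k + 1) * ((2 * n + k).choose (n - k) : ℚ) := by
  intro n k hkn
  obtain ⟨r, rfl⟩ : ∃ r, n = r + k := ⟨n - k, by omega⟩
  have h1 : c * (PowerSeries.X * c ^ 3) ^ k = PowerSeries.X ^ k * c ^ (3 * k + 1) := by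
    rw [mul_pow, ← pow_mul]
    ring
  rw [h1, PowerSeries.coeff_X_pow_mul, catCoeff c hc0 hc]
  rw [show r + k - k = r from by omega, show 2 * (r + k) + k = 2 * r + 3 * k from by ring]
  simp only [catF, if_neg (by omega : ¬(3 * k + 1 = 0))]
  rw [show 2 * r + (3 * k + 1) = 2 * r + 3 * k + 1 from by ring]
  have key := catFin r k
  push_cast at key ⊢
  linear_combination key
end

section
/- For all natural numbers n and k with k ≤ n, the coefficient of xⁿ in c²·(x·c³)^k equals (3k+2)/(n+2k+2) · C(2n+k+1, n-k) in ℚ, where C denotes the binomial coefficient. That is, the general term of the unsigned Riordan array (c(x)², x·c(x)³) is (3k+2)/(n+2k+2)·C(2n+k+1, n-k). -/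
open PowerSeries Finset

private def Bfun (n m : ℕ) : ℚ :=
  if n = 0 then 1 else (m : ℚ) / (2 * n + m) * ((2 * n + m).choose n : ℚ)

private lemma Bfun_val {n m : ℕ} (h : n ≠ 0 ∨ m ≠ 0) :
    Bfun n m = (m : ℚ) / (2 * n + m) * ((2 * n + m).choose n : ℚ) := by
  rcases eq_or_ne n 0 with rfl | hn
  · have hm : m ≠ 0 := by tauto
    simp only [Bfun, if_pos rfl]
    rw [show 2 * 0 + m = m from by ring]
    have : (m : ℚ) ≠ 0 := Nat.cast_ne_zero.mpr hm
    push_cast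
    field_simp
    simp
  · simp [Bfun, hn]

private lemma Bfun_rec (n m : ℕ) :
    Bfun (n + 1) (m + 1) = Bfun (n + 1) m + Bfun n (m + 2) := by
  rw [Bfun_val (Or.inl (Nat.succ_ne_zero n)), Bfun_val (Or.inl (Nat.succ_ne_zero n)),
    Bfun_val (Or.inr (by omega))]
  rw [show 2 * (n + 1) + (m + 1) = 2 * n + m + 3 from by ring,
    show 2 * (n + 1) + m = 2 * n + m + 2 from by ring,
    show 2 * n + (m + 2) = 2 * n + m + 2 from by ring]
  have pascal : ((2 * n + m + 3).choose (n + 1) : ℚ) =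
      ((2 * n + m + 2).choose n : ℚ) + ((2 * n + m + 2).choose (n + 1) : ℚ) := by
    rw [show 2 * n + m + 3 = (2 * n + m + 2) + 1 from rfl]
    exact_mod_cast congrArg (Nat.cast : ℕ → ℚ) (Nat.choose_succ_succ (2 * n + m + 2) n)
  have hrel : ((2 * n + m + 2).choose (n + 1) : ℚ) * (n + 1) =
      ((2 * n + m + 2).choose n : ℚ) * (n + m + 2) := by
    have := Nat.choose_succ_right_eq (2 * n + m + 2) n
    rw [show 2 * n + m + 2 - n = n + m + 2 from by omega] at this
    exact_mod_cast congrArg (Nat.cast : ℕ → ℚ) this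
  have h1 : (2 * (n : ℚ) + m + 3) ≠ 0 := by positivity
  have h2 : (2 * (n : ℚ) + m + 2) ≠ 0 := by positivity
  push_cast
  field_simp
  linear_combination ((m : ℚ) + 1) * (2 * (n : ℚ) + m + 2) ^ 2 * pascal + 2 * (2 * (n : ℚ) + m + 2) * hrel

/-- The general term of the Riordan array `(c(x)², x·c(x)³)` is
`(3k+2)/(n+2k+2)·C(2n+k+1, n-k)`, where `c` is the Catalan generating function. -/
theorem stmt6 (c : PowerSeries ℚ) (hc0 : PowerSeries.constantCoeff c = 1)
    (hc : c = 1 + PowerSeries.X * c ^ 2) :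
    ∀ n k : ℕ, k ≤ n →
      PowerSeries.coeff n (c ^ 2 * (PowerSeries.X * c ^ 3) ^ k) =
        (3 * (k : ℚ) + 2) / ((n : ℚ) + 2 * k + 2) * ((2 * n + k + 1).choose (n - k) : ℚ) := by
  have key : ∀ n m : ℕ, coeff n (c ^ m) = Bfun n m := by
    intro n
    induction n with
    | zero =>
      intro m
      simp [Bfun, coeff_zero_eq_constantCoeff, map_pow, hc0]
    | succ n ih =>
      intro m
      induction m with
      | zero => simp [Bfun]
      | succ m ihm =>
        have hrec : c ^ (m + 1) = c ^ m + X * c ^ (m + 2) := by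
          calc c ^ (m + 1) = c ^ m * c := by ring
          _ = c ^ m * (1 + X * c ^ 2) := by rw [← hc]
          _ = c ^ m + X * c ^ (m + 2) := by ring
        rw [hrec, map_add, ihm, coeff_succ_X_mul, ih, Bfun_rec]
  intro n k hkn
  have h1 : c ^ 2 * (X * c ^ 3) ^ k = X ^ k * c ^ (3 * k + 2) := by
    rw [mul_pow, ← pow_mul]; ring
  rw [h1, show n = (n - k) + k from (Nat.sub_add_cancel hkn).symm, coeff_X_pow_mul,
    key, Bfun_val (Or.inr (by omega))]
  rw [show 2 * (n - k) + (3 * k + 2) = 2 * n + k + 2 from by omega]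
  have hnat : ((2 * n + k + 2 : ℕ) : ℚ) * ((2 * n + k + 1).choose (n - k) : ℚ) =
      ((n + 2 * k + 2 : ℕ) : ℚ) * ((2 * n + k + 2).choose (n - k) : ℚ) := by
    have h1 := Nat.add_one_mul_choose_eq (2 * n + k + 1) (n - k)
    have h2 := Nat.choose_succ_right_eq (2 * n + k + 2) (n - k)
    rw [show 2 * n + k + 2 - (n - k) = n + 2 * k + 2 from by omega] at h2
    have : (2 * n + k + 2) * (2 * n + k + 1).choose (n - k)
        = (n + 2 * k + 2) * (2 * n + k + 2).choose (n - k) := by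
      rw [show 2 * n + k + 2 = Nat.succ (2 * n + k + 1) from rfl] at *
      rw [h1, h2]
      ring
    exact_mod_cast this
  rw [Nat.sub_add_cancel hkn]
  push_cast [Nat.cast_sub hkn] at hnat ⊢
  have hd1 : ((n : ℚ) - k) + k = (n : ℚ) := by ring
  have h2 : (2 * (n : ℚ) + k + 2) ≠ 0 := by positivity
  have h3 : ((n : ℚ) + 2 * k + 2) ≠ 0 := by positivity
  rw [show 2 * ((n : ℚ) - k) + (3 * k + 2) = 2 * n + k + 2 from by ring]
  field_simp
  linear_combination (-1 : ℚ) * hnat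
end

section
/- Let a_n ∈ ℚ be the coefficient of xⁿ in c·(1 - x²·c³)⁻¹ (the diagonal sums of the unsigned Riordan array (c, x·c³), the sequence beginning 1, 1, 3, 9, 29, 97, …). Then for every n ≥ 0, det(a_{i+j})_{0≤i,j≤n} = 2ⁿ and det(a_{i+j+1})_{0≤i,j≤n} = 2ⁿ·(1-n). -/
open PowerSeries Finset Matrix



def bb (k : ℕ) : ℚ := if k = 0 then 1 else 2
def ll (k : ℕ) : ℚ := if k ≤ 1 then 2 else 1
def dd (k : ℕ) : ℚ := if k = 0 then 1 else 2

def LL : ℕ → ℕ → ℚ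
  | 0, 0 => 1
  | 0, _+1 => 0
  | n+1, k => (match k with | 0 => 0 | j+1 => LL n j) + bb k * LL n k + ll (k+1) * LL n (k+1)

def Lp (m k : ℕ) : ℚ := match k with | 0 => 0 | j+1 => LL m j

lemma Lp_zero (m : ℕ) : Lp m 0 = 0 := rfl
lemma Lp_succ (m j : ℕ) : Lp m (j+1) = LL m j := rfl

lemma LL_succ (m k : ℕ) : LL (m+1) k = Lp m k + bb k * LL m k + ll (k+1) * LL m (k+1) := by
  cases k <;> rfl

lemma LL_eq_zero : ∀ n k, n < k → LL n k = 0 := by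
  intro n
  induction n with
  | zero => intro k hk; match k, hk with | k+1, _ => rfl
  | succ n ih =>
    intro k hk
    rw [LL_succ]
    rw [ih k (by omega), ih (k+1) (by omega)]
    have hp : Lp n k = 0 := by
      match k, hk with
      | k+1, hk => exact ih k (by omega)
    rw [hp]; ring

lemma LL_diag : ∀ n, LL n n = 1 := by
  intro n
  induction n with
  | zero => rfl
  | succ n ih =>
    rw [LL_succ, Lp_succ, ih, LL_eq_zero n (n+1) (by omega), LL_eq_zero n (n+1+1) (by omega)]
    ring

lemma dd_ll (k : ℕ) : dd k * ll (k+1) = dd (k+1) := by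
  cases k with
  | zero => norm_num [dd, ll]
  | succ k => norm_num [dd, ll]

lemma core : ∀ m n, (∑ k ∈ range (m+1), LL m k * dd k * LL n k) = LL (m+n) 0 := by
  intro m
  induction m with
  | zero => intro n; simp [LL, dd]
  | succ m ih =>
    intro n
    have expand : (∑ k ∈ range (m+2), LL (m+1) k * dd k * LL n k)
        = (∑ k ∈ range (m+2), Lp m k * dd k * LL n k)
          + (∑ k ∈ range (m+2), bb k * LL m k * dd k * LL n k)
          + (∑ k ∈ range (m+2), ll (k+1) * LL m (k+1) * dd k * LL n k) := by
      rw [← Finset.sum_add_distrib, ← Finset.sum_add_distrib]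
      refine Finset.sum_congr rfl fun k _ => ?_
      rw [LL_succ]; ring
    have hA : (∑ k ∈ range (m+2), Lp m k * dd k * LL n k)
        = ∑ j ∈ range (m+1), LL m j * dd j * (ll (j+1) * LL n (j+1)) := by
      rw [Finset.sum_range_succ']
      simp only [Lp_succ, Lp_zero, zero_mul, add_zero]
      refine Finset.sum_congr rfl fun j _ => ?_
      rw [← dd_ll]; ring
    have hB : (∑ k ∈ range (m+2), bb k * LL m k * dd k * LL n k)
        = ∑ k ∈ range (m+1), LL m k * dd k * (bb k * LL n k) := by
      rw [Finset.sum_range_succ, LL_eq_zero m (m+1) (by omega)]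
      simp only [mul_zero, zero_mul, add_zero]
      refine Finset.sum_congr rfl fun k _ => by ring
    have hC' : (∑ j ∈ range (m+1), LL m j * dd j * Lp n j)
        = ∑ x ∈ range m, ll (x+1) * LL m (x+1) * dd x * LL n x := by
      rw [Finset.sum_range_succ']
      simp only [Lp_succ, Lp_zero, mul_zero, add_zero]
      refine Finset.sum_congr rfl fun x _ => ?_
      rw [← dd_ll]; ring
    have hC : (∑ k ∈ range (m+2), ll (k+1) * LL m (k+1) * dd k * LL n k)
        = ∑ j ∈ range (m+1), LL m j * dd j * Lp n j := by
      rw [Finset.sum_range_succ, LL_eq_zero m (m+2) (by omega)]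
      simp only [mul_zero, zero_mul, add_zero]
      rw [Finset.sum_range_succ, LL_eq_zero m (m+1) (by omega)]
      simp only [mul_zero, zero_mul, add_zero]
      exact hC'.symm
    calc (∑ k ∈ range (m+1+1), LL (m+1) k * dd k * LL n k)
        = (∑ k ∈ range (m+2), Lp m k * dd k * LL n k)
          + (∑ k ∈ range (m+2), bb k * LL m k * dd k * LL n k)
          + (∑ k ∈ range (m+2), ll (k+1) * LL m (k+1) * dd k * LL n k) := expand
      _ = (∑ j ∈ range (m+1), LL m j * dd j * (ll (j+1) * LL n (j+1)))
          + (∑ k ∈ range (m+1), LL m k * dd k * (bb k * LL n k))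
          + (∑ j ∈ range (m+1), LL m j * dd j * Lp n j) := by rw [hA, hB, hC]
      _ = ∑ k ∈ range (m+1), LL m k * dd k * LL (n+1) k := by
          rw [← Finset.sum_add_distrib, ← Finset.sum_add_distrib]
          refine Finset.sum_congr rfl fun k _ => ?_
          rw [LL_succ]; ring
      _ = LL (m + (n+1)) 0 := ih (n+1)
      _ = LL (m+1+n) 0 := by rw [show m+(n+1) = m+1+n from by omega]

lemma master (m n N : ℕ) (h : n < N) :
    (∑ k ∈ range N, LL m k * dd k * LL n k) = LL (m+n) 0 := by
  have trunc : (∑ k ∈ range N, LL m k * dd k * LL n k)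
      = ∑ k ∈ range (n+1), LL m k * dd k * LL n k := by
    refine (Finset.sum_subset (by intro x hx; simp at *; omega) ?_).symm
    intro x _ hx
    simp only [Finset.mem_range, not_lt] at hx
    rw [LL_eq_zero n x (by omega), mul_zero]
  rw [trunc]
  have : (∑ k ∈ range (n+1), LL m k * dd k * LL n k)
      = ∑ k ∈ range (n+1), LL n k * dd k * LL m k :=
    Finset.sum_congr rfl fun k _ => by ring
  rw [this, core n m, add_comm]

lemma LL00 : LL 0 0 = 1 := rfl
lemma LL0succ (k : ℕ) : LL 0 (k+1) = 0 := rfl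
lemma bb0 : bb 0 = 1 := rfl
lemma bbs (k : ℕ) : bb (k+1) = 2 := by unfold bb; rw [if_neg (by omega)]
lemma ll1 : ll 1 = 2 := by unfold ll; rw [if_pos (by omega)]
lemma lls (k : ℕ) : ll (k+2) = 1 := by unfold ll; rw [if_neg (by omega)]
lemma dd0 : dd 0 = 1 := rfl
lemma dds (k : ℕ) : dd (k+1) = 2 := by unfold dd; rw [if_neg (by omega)]

lemma LL_coeff (c : PowerSeries ℚ) (hc0 : constantCoeff c = 1) (hc : c = 1 + X * c^2) :
    ∀ n k, LL n k = coeff n (X^k * c^(2*k) * (c * (1 - X^2*c^3)⁻¹)) := by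
  set u : PowerSeries ℚ := 1 - X^2*c^3 with hu
  set f : PowerSeries ℚ := c * u⁻¹ with hf
  have hu0 : constantCoeff u = 1 := by
    simp [hu, map_sub, _root_.map_mul, map_pow, constantCoeff_X]
  have hui : u * u⁻¹ = 1 := PowerSeries.mul_inv_cancel u (by rw [hu0]; norm_num)
  have hf0 : constantCoeff f = 1 := by
    rw [hf, _root_.map_mul, hc0, PowerSeries.constantCoeff_inv, hu0]; norm_num
  have h1 : c * (1 - X - 2*X^2*c^2) = u := by
    rw [hu]; linear_combination (1 + X*c) * hc
  have h2 : f * (1 - X - 2*X^2*c^2) = 1 := by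
    calc f * (1 - X - 2*X^2*c^2) = (c * (1 - X - 2*X^2*c^2)) * u⁻¹ := by rw [hf]; ring
      _ = u * u⁻¹ := by rw [h1]
      _ = 1 := hui
  have keyf : f = 1 + X * f + (X*(X*(c^2*f)) + X*(X*(c^2*f))) := by linear_combination h2
  have keyc : c^2 = 1 + 2*X*c^2 + X^2*c^4 := by linear_combination (c + 1 + X*c^2) * hc
  intro n
  induction n with
  | zero =>
    intro k
    cases k with
    | zero =>
      rw [LL00, coeff_zero_eq_constantCoeff_apply]
      rw [show X^0 * c^(2*0) * f = f by ring, hf0]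
    | succ k =>
      rw [LL0succ, coeff_zero_eq_constantCoeff_apply]
      rw [show X^(k+1) * c^(2*(k+1)) * f = X * (X^k * c^(2*(k+1)) * f) by ring]
      rw [_root_.map_mul, constantCoeff_X, zero_mul]
  | succ n ih =>
    intro k
    cases k with
    | zero =>
      rw [LL_succ, Lp_zero, bb0, ll1]
      have h3 : X^0 * c^(2*0) * f = f := by ring
      conv_rhs => rw [h3, keyf]
      rw [map_add, map_add, map_add, coeff_one, if_neg (Nat.succ_ne_zero n),
        coeff_succ_X_mul, coeff_succ_X_mul]
      have e0 := ih 0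
      rw [show X^0*c^(2*0)*f = f from by ring] at e0
      have e1 := ih 1
      rw [show X^1*c^(2*1)*f = X*(c^2*f) from by ring] at e1
      rw [← e0, ← e1]
      ring
    | succ k =>
      rw [LL_succ, Lp_succ, bbs, lls]
      have hs : X^(k+1) * c^(2*(k+1)) * f
          = X * ((X^k*c^(2*k)*f + X^(k+1)*c^(2*(k+1))*f) +
              (X^(k+1)*c^(2*(k+1))*f + X^(k+2)*c^(2*(k+2))*f)) := by
        linear_combination (X^(k+1)*c^(2*k)*f) * keyc
      rw [hs, coeff_succ_X_mul, map_add, map_add, map_add, ← ih k, ← ih (k+1), ← ih (k+2)]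
      ring
def uent (l k : ℕ) : ℚ :=
  (if l+1 = k then 1 else 0) + (if l = k then bb k else 0) + (if l = k+1 then ll (k+1) else 0)

def qq (n i : ℕ) : ℚ :=
  if i = 0 then (1 - (n:ℚ))/((n:ℚ)+1) else ((n:ℚ)+2-(i:ℚ))/((n:ℚ)+1-(i:ℚ))
def ss (n i : ℕ) : ℚ :=
  if i = 0 then 2*(n:ℚ)/((n:ℚ)+1) else ((n:ℚ)-(i:ℚ))/((n:ℚ)+1-(i:ℚ))
def aent (n i k : ℕ) : ℚ := (if i = k then qq n i else 0) + (if i+1 = k then 1 else 0)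
def bent (n i k : ℕ) : ℚ := (if i = k then 1 else 0) + (if i = k+1 then ss n k else 0)

lemma bent_diag (n k : ℕ) : bent n k k = 1 := by
  unfold bent; rw [if_pos rfl, if_neg (by omega)]; ring
lemma bent_sub (n k : ℕ) : bent n (k+1) k = ss n k := by
  unfold bent; rw [if_neg (by omega), if_pos rfl]; ring
lemma bent_other (n j k : ℕ) (h1 : j ≠ k) (h2 : j ≠ k+1) : bent n j k = 0 := by
  unfold bent; rw [if_neg h1, if_neg h2]; ring

lemma AB_entry (n l k : ℕ) (hl : l ≤ n) (hk : k ≤ n) :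
    (∑ j ∈ range (n+1), aent n l j * bent n j k) = uent l k := by
  have h1 : ∀ j, aent n l j * bent n j k
      = (if l = j then qq n l * bent n j k else 0) + (if l+1 = j then bent n j k else 0) := by
    intro j; unfold aent; split_ifs <;> ring
  simp only [h1]
  rw [Finset.sum_add_distrib,
    Finset.sum_ite_eq (range (n+1)) l (fun j => qq n l * bent n j k),
    Finset.sum_ite_eq (range (n+1)) (l+1) (fun j => bent n j k)]
  rw [if_pos (by simp [Nat.lt_succ_iff]; omega : l ∈ range (n+1))]
  have hn1 : ((n:ℚ)+1) ≠ 0 := by positivity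
  rcases eq_or_ne k (l+1) with h | h
  · subst h
    rw [bent_other n l (l+1) (by omega) (by omega), bent_diag,
      if_pos (by simp [Nat.lt_succ_iff]; omega : l+1 ∈ range (n+1))]
    unfold uent
    rw [if_pos rfl, if_neg (by omega), if_neg (by omega)]
    ring
  rcases eq_or_ne k l with h2 | h2
  · subst h2
    rw [bent_diag]
    have hu : uent k k = bb k := by
      unfold uent; rw [if_neg (by omega), if_pos rfl, if_neg (by omega)]; ring
    rw [hu]
    rcases eq_or_ne k n with rfl | hkn
    · rw [if_neg (by simp)]
      rcases Nat.eq_zero_or_pos k with rfl | hpos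
      · norm_num [qq, bb]
      · rw [qq, if_neg (by omega), bb, if_neg (by omega)]
        have e1 : (k:ℚ)+2-(k:ℚ) = 2 := by ring
        have e2 : (k:ℚ)+1-(k:ℚ) = 1 := by ring
        rw [e1, e2]; norm_num
    · rw [if_pos (by simp [Nat.lt_succ_iff]; omega), bent_sub]
      rcases Nat.eq_zero_or_pos k with rfl | hpos
      · rw [qq, if_pos rfl, ss, if_pos rfl, bb, if_pos rfl]
        field_simp; ring
      · rw [qq, if_neg (by omega), ss, if_neg (by omega), bb, if_neg (by omega)]
        have hkq : (k:ℚ) ≤ (n:ℚ) := by exact_mod_cast hl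
        have hnz : (n:ℚ)+1-(k:ℚ) ≠ 0 := by intro hcon; nlinarith
        field_simp
        ring
  rcases eq_or_ne l (k+1) with h3 | h3
  · subst h3
    rw [bent_sub, bent_other n (k+2) k (by omega) (by omega)]
    have hu : uent (k+1) k = ll (k+1) := by
      unfold uent; rw [if_neg (by omega), if_neg (by omega), if_pos rfl]; ring
    rw [hu]
    have hkn : k+1 ≤ n := hl
    have hklt : (k:ℚ) < (n:ℚ) := by exact_mod_cast (by omega : k < n)
    have hn0 : (n:ℚ) ≠ 0 := by
      have : (0:ℚ) ≤ (k:ℚ) := by positivity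
      intro hcon; nlinarith
    rcases Nat.eq_zero_or_pos k with rfl | hpos
    · have c1 : ¬(0+1 = 0) := by omega
      have c2 : (0:ℕ) = 0 := rfl
      have c3 : 0+1 ≤ 1 := by omega
      rw [qq, if_neg c1, ss, if_pos c2, ll, if_pos c3]
      push_cast
      have e1 : (n:ℚ)+2-1 = (n:ℚ)+1 := by ring
      have e2 : (n:ℚ)+1-1 = (n:ℚ) := by ring
      rw [e1, e2]
      field_simp
      simp only [ite_self]
      ring
    · have c1 : ¬(k+1 = 0) := by omega
      have c2 : ¬(k = 0) := by omega
      have c3 : ¬(k+1 ≤ 1) := by omega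
      rw [qq, if_neg c1, ss, if_neg c2, ll, if_neg c3]
      have h4 : (n:ℚ)-(k:ℚ) ≠ 0 := by intro hcon; nlinarith
      have h5 : (n:ℚ)+1-((k:ℚ)+1) ≠ 0 := by intro hcon; nlinarith
      have h6 : (n:ℚ)+1-(k:ℚ) ≠ 0 := by intro hcon; nlinarith
      push_cast
      field_simp
      simp only [ite_self]
      ring
  · rw [bent_other n l k (by omega) (by omega),
      bent_other n (l+1) k (by omega) (by omega)]
    have hu : uent l k = 0 := by
      unfold uent; rw [if_neg (by omega), if_neg (by omega), if_neg (by omega)]; ring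
    rw [hu, mul_zero]
    split_ifs <;> ring
lemma rowrec (N i k : ℕ) (hi : i ≤ N) (hk : k ≤ N) :
    (∑ l ∈ range (N+1), LL i l * uent l k) = LL (i+1) k := by
  have h1 : ∀ l, LL i l * uent l k
      = (if l+1 = k then LL i l else 0) + (if l = k then bb k * LL i l else 0)
        + (if l = k+1 then ll (k+1) * LL i l else 0) := by
    intro l; unfold uent; split_ifs <;> ring
  simp only [h1]
  rw [Finset.sum_add_distrib, Finset.sum_add_distrib]
  have e2 : (∑ l ∈ range (N+1), if l = k then bb k * LL i l else 0) = bb k * LL i k := by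
    rw [Finset.sum_ite_eq' (range (N+1)) k (fun l => bb k * LL i l)]
    rw [if_pos (by simp [Nat.lt_succ_iff, hk])]
  have e3 : (∑ l ∈ range (N+1), if l = k+1 then ll (k+1) * LL i l else 0)
      = ll (k+1) * LL i (k+1) := by
    by_cases h : k+1 ≤ N
    · rw [Finset.sum_ite_eq' (range (N+1)) (k+1) (fun l => ll (k+1) * LL i l)]
      rw [if_pos (by simp [Nat.lt_succ_iff]; omega)]
    · have hz : LL i (k+1) = 0 := LL_eq_zero i (k+1) (by omega)
      rw [hz, mul_zero]
      apply Finset.sum_eq_zero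
      intro l hl
      rw [if_neg]
      simp only [Finset.mem_range] at hl
      omega
  have e1 : (∑ l ∈ range (N+1), if l+1 = k then LL i l else 0) = Lp i k := by
    cases k with
    | zero =>
      rw [Lp_zero]
      apply Finset.sum_eq_zero; intro l _; rw [if_neg (by omega)]
    | succ k' =>
      rw [Lp_succ]
      have hcong : ∀ l, (if l+1 = k'+1 then LL i l else 0) = (if l = k' then LL i l else 0) := by
        intro l
        by_cases h : l = k'
        · rw [if_pos (by omega), if_pos h]
        · rw [if_neg (by omega), if_neg h]
      simp only [hcong]
      rw [Finset.sum_ite_eq' (range (N+1)) k' (fun l => LL i l)]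
      rw [if_pos (by simp [Nat.lt_succ_iff]; omega)]
  rw [e1, e2, e3, LL_succ]

lemma telescope (n : ℕ) : ∀ m, m ≤ n → (∏ i ∈ range m, qq n (i+1)) = ((n:ℚ)+1)/((n:ℚ)+1-(m:ℚ)) := by
  intro m
  induction m with
  | zero =>
    intro _
    have hn1 : ((n:ℚ)+1) ≠ 0 := by positivity
    simp only [Finset.prod_range_zero, Nat.cast_zero, sub_zero]
    rw [div_self hn1]
  | succ m ih =>
    intro h
    rw [Finset.prod_range_succ, ih (by omega)]
    have c1 : ¬(m+1 = 0) := by omega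
    rw [qq, if_neg c1]
    have hmn : (m:ℚ) < (n:ℚ) := by exact_mod_cast (by omega : m < n)
    have h1 : (n:ℚ)+1-(m:ℚ) ≠ 0 := by intro hcon; nlinarith
    push_cast
    have e1 : (n:ℚ)+2-((m:ℚ)+1) = (n:ℚ)+1-(m:ℚ) := by ring
    have e2 : (n:ℚ)+1-((m:ℚ)+1) = (n:ℚ)-(m:ℚ) := by ring
    rw [e1, e2, div_mul_div_comm, mul_comm ((n:ℚ)+1) ((n:ℚ)+1-(m:ℚ)),
      mul_div_mul_left _ _ h1]

lemma prodq (n : ℕ) : (∏ i ∈ range (n+1), qq n i) = 1 - (n:ℚ) := by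
  rw [Finset.prod_range_succ', telescope n n le_rfl]
  have hn1 : ((n:ℚ)+1) ≠ 0 := by positivity
  have e : (n:ℚ)+1-(n:ℚ) = 1 := by ring
  rw [e, qq, if_pos rfl]
  field_simp

/-- The diagonal sums `a_n = [xⁿ] c·(1 - x²·c³)⁻¹` of the Riordan array
`(c, x·c³)` have Hankel transform `2ⁿ`, and the once-shifted sequence has
Hankel transform `2ⁿ·(1-n)`. -/
theorem stmt7 (c : PowerSeries ℚ) (hc0 : PowerSeries.constantCoeff c = 1)
    (hc : c = 1 + PowerSeries.X * c ^ 2)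
    (a : ℕ → ℚ)
    (ha : ∀ n, a n = PowerSeries.coeff n (c * (1 - PowerSeries.X ^ 2 * c ^ 3)⁻¹)) :
    ∀ n : ℕ,
      (Matrix.of fun i j : Fin (n + 1) => a ((i : ℕ) + (j : ℕ))).det = 2 ^ n ∧
      (Matrix.of fun i j : Fin (n + 1) => a ((i : ℕ) + (j : ℕ) + 1)).det =
        2 ^ n * (1 - (n : ℚ)) := by
  intro n
  have haL : ∀ m : ℕ, a m = LL m 0 := by
    intro m
    rw [ha m, LL_coeff c hc0 hc m 0]
    congr 1
    ring
  set Lm : Matrix (Fin (n+1)) (Fin (n+1)) ℚ :=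
    Matrix.of (fun i k : Fin (n+1) => LL i k) with hLm
  set Dm : Matrix (Fin (n+1)) (Fin (n+1)) ℚ :=
    Matrix.diagonal (fun k : Fin (n+1) => dd k) with hDm
  set Um : Matrix (Fin (n+1)) (Fin (n+1)) ℚ :=
    Matrix.of (fun l k : Fin (n+1) => uent l k) with hUm
  set Am : Matrix (Fin (n+1)) (Fin (n+1)) ℚ :=
    Matrix.of (fun i k : Fin (n+1) => aent n i k) with hAm
  set Bm : Matrix (Fin (n+1)) (Fin (n+1)) ℚ :=
    Matrix.of (fun i k : Fin (n+1) => bent n i k) with hBm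
  have hLdet : Lm.det = 1 := by
    have htri : Lm.BlockTriangular OrderDual.toDual := by
      intro i j hij
      have hij' : i < j := hij
      rw [hLm, Matrix.of_apply]
      exact LL_eq_zero _ _ (Fin.lt_def.mp hij')
    rw [Matrix.det_of_lowerTriangular Lm htri]
    apply Finset.prod_eq_one
    intro i _
    rw [hLm, Matrix.of_apply, LL_diag]
  have hDdet : Dm.det = 2^n := by
    rw [hDm, Matrix.det_diagonal]
    rw [Fin.prod_univ_eq_prod_range (fun k => dd k) (n+1)]
    rw [Finset.prod_range_succ']
    simp only [dds]
    rw [Finset.prod_const, Finset.card_range, dd0, mul_one]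
  have hHentry : (Matrix.of fun i j : Fin (n + 1) => a ((i : ℕ) + (j : ℕ))) = Lm * Dm * Lmᵀ := by
    ext i j
    rw [Matrix.mul_apply]
    simp only [hLm, hDm, Matrix.mul_diagonal, Matrix.transpose_apply, Matrix.of_apply]
    rw [Fin.sum_univ_eq_sum_range (fun k => LL i k * dd k * LL j k) (n+1)]
    rw [master i j (n+1) j.isLt, haL]
  have hLU : Lm * Um = Matrix.of (fun i k : Fin (n+1) => LL ((i:ℕ)+1) (k:ℕ)) := by
    ext i k
    rw [Matrix.mul_apply]
    simp only [hLm, hUm, Matrix.of_apply]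
    rw [Fin.sum_univ_eq_sum_range (fun l => LL i l * uent l k) (n+1)]
    exact rowrec n i k (Nat.lt_succ_iff.mp i.isLt) (Nat.lt_succ_iff.mp k.isLt)
  have hSentry : (Matrix.of fun i j : Fin (n + 1) => a ((i : ℕ) + (j : ℕ) + 1))
      = Lm * Um * Dm * Lmᵀ := by
    ext i j
    rw [Matrix.mul_apply]
    rw [hLU]
    simp only [hDm, Matrix.mul_diagonal, Matrix.transpose_apply, hLm, Matrix.of_apply, hLU]
    rw [Fin.sum_univ_eq_sum_range (fun k => LL ((i:ℕ)+1) k * dd k * LL j k) (n+1)]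
    rw [master ((i:ℕ)+1) j (n+1) j.isLt, haL]
    congr 1
    omega
  have hAdet : Am.det = 1 - (n:ℚ) := by
    have htri : Am.BlockTriangular id := by
      intro i j hij
      have hij' : (j:ℕ) < (i:ℕ) := Fin.lt_def.mp hij
      rw [hAm, Matrix.of_apply]
      unfold aent
      rw [if_neg (by omega), if_neg (by omega)]
      ring
    rw [Matrix.det_of_upperTriangular htri]
    have hdiag : ∀ i : Fin (n+1), Am i i = qq n (i:ℕ) := by
      intro i
      rw [hAm, Matrix.of_apply]
      unfold aent
      rw [if_pos rfl, if_neg (by omega)]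
      ring
    rw [Finset.prod_congr rfl (fun i _ => hdiag i)]
    rw [Fin.prod_univ_eq_prod_range (fun i => qq n i) (n+1)]
    exact prodq n
  have hBdet : Bm.det = 1 := by
    have htri : Bm.BlockTriangular OrderDual.toDual := by
      intro i j hij
      have hij' : (i:ℕ) < (j:ℕ) := Fin.lt_def.mp hij
      rw [hBm, Matrix.of_apply]
      unfold bent
      rw [if_neg (by omega), if_neg (by omega)]
      ring
    rw [Matrix.det_of_lowerTriangular Bm htri]
    apply Finset.prod_eq_one
    intro i _
    rw [hBm, Matrix.of_apply, bent_diag]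
  have hUdet : Um.det = 1 - (n:ℚ) := by
    have hUAB : Um = Am * Bm := by
      ext l k
      rw [Matrix.mul_apply]
      simp only [hAm, hBm, hUm, Matrix.of_apply]
      rw [Fin.sum_univ_eq_sum_range (fun j => aent n l j * bent n j k) (n+1)]
      exact (AB_entry n l k (Nat.lt_succ_iff.mp l.isLt) (Nat.lt_succ_iff.mp k.isLt)).symm
    rw [hUAB, Matrix.det_mul, hAdet, hBdet, mul_one]
  constructor
  · rw [hHentry, Matrix.det_mul, Matrix.det_mul, Matrix.det_transpose, hLdet, hDdet]
    ring
  · rw [hSentry, Matrix.det_mul, Matrix.det_mul, Matrix.det_mul, Matrix.det_transpose,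
      hLdet, hDdet, hUdet]
    ring
end

section
/- Let r, λ, μ, σ ∈ ℝ with σ ≠ 0, and set s = σ². Let d_{n,k} be the coefficient of tⁿ in the real formal power series (1 - λt - μt²)·(1 + rt + st²)⁻¹ · (t·(1 + rt + st²)⁻¹)^k. Then for every n ≥ 2 and every x ∈ ℝ, ∑_{k=0}^{n} d_{n,k}·x^k = σⁿ·U_n((x-r)/(2σ)) - λ·σ^{n-1}·U_{n-1}((x-r)/(2σ)) - μ·σ^{n-2}·U_{n-2}((x-r)/(2σ)), where U_m is the m-th Chebyshev polynomial of the second kind. -/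
open PowerSeries Finset Polynomial

/-- The rows of the Riordan array `((1-λt-μt²)/(1+rt+st²), t/(1+rt+st²))`
with `s = σ²` are the generalized Chebyshev polynomials
`σⁿU_n((x-r)/(2σ)) - λσ^{n-1}U_{n-1}((x-r)/(2σ)) - μσ^{n-2}U_{n-2}((x-r)/(2σ))`. -/
theorem stmt9 (r lam mu σ : ℝ) (hσ : σ ≠ 0) (s : ℝ) (hs : s = σ ^ 2)
    (d : ℕ → ℕ → ℝ)
    (hd : ∀ n k : ℕ, d n k =
      PowerSeries.coeff (R := ℝ) n
        ((1 - PowerSeries.C (R := ℝ) lam * PowerSeries.X - PowerSeries.C (R := ℝ) mu * PowerSeries.X ^ 2) *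
            (1 + PowerSeries.C (R := ℝ) r * PowerSeries.X + PowerSeries.C (R := ℝ) s * PowerSeries.X ^ 2)⁻¹ *
          (PowerSeries.X *
            (1 + PowerSeries.C (R := ℝ) r * PowerSeries.X +
              PowerSeries.C (R := ℝ) s * PowerSeries.X ^ 2)⁻¹) ^ k)) :
    ∀ n : ℕ, 2 ≤ n → ∀ x : ℝ,
      ∑ k ∈ Finset.range (n + 1), d n k * x ^ k =
        σ ^ n * (Polynomial.Chebyshev.U ℝ (n : ℤ)).eval ((x - r) / (2 * σ)) -
          lam * σ ^ (n - 1) * (Polynomial.Chebyshev.U ℝ ((n : ℤ) - 1)).eval ((x - r) / (2 * σ)) -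
          mu * σ ^ (n - 2) * (Polynomial.Chebyshev.U ℝ ((n : ℤ) - 2)).eval ((x - r) / (2 * σ)) := by
  intro n hn x
  obtain ⟨m, rfl⟩ : ∃ m, n = m + 2 := ⟨n - 2, by omega⟩
  set y : ℝ := (x - r) / (2 * σ) with hy
  set g : ℕ → ℝ := fun j => σ ^ j * (Polynomial.Chebyshev.U ℝ (j : ℤ)).eval y with hgdef
  set G : PowerSeries ℝ := PowerSeries.mk g with hG
  set Q : PowerSeries ℝ := 1 + PowerSeries.C (R := ℝ) r * PowerSeries.X +
    PowerSeries.C (R := ℝ) s * PowerSeries.X ^ 2 with hQdef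
  set N : PowerSeries ℝ := 1 - PowerSeries.C (R := ℝ) lam * PowerSeries.X -
    PowerSeries.C (R := ℝ) mu * PowerSeries.X ^ 2 with hNdef
  set P : PowerSeries ℝ := 1 + PowerSeries.C (R := ℝ) (r - x) * PowerSeries.X +
    PowerSeries.C (R := ℝ) s * PowerSeries.X ^ 2 with hPdef
  have hQ0 : PowerSeries.constantCoeff (R := ℝ) Q ≠ 0 := by simp [hQdef]
  have hQinv : Q * Q⁻¹ = 1 := PowerSeries.mul_inv_cancel _ hQ0
  have hg0 : g 0 = 1 := by simp [hgdef, Polynomial.Chebyshev.U_zero]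
  have hg1 : g 1 = x - r := by
    simp only [hgdef, Nat.cast_one, Polynomial.Chebyshev.U_one, eval_mul, eval_ofNat, eval_X]
    field_simp [hy]
    rw [hy]; field_simp
  have hgrec : ∀ j : ℕ, g (j + 2) = (x - r) * g (j + 1) - s * g j := by
    intro j
    have hU := Polynomial.Chebyshev.U_add_two ℝ (j : ℤ)
    have e2 : ((j + 2 : ℕ) : ℤ) = (j : ℤ) + 2 := by push_cast; ring
    have e1 : ((j + 1 : ℕ) : ℤ) = (j : ℤ) + 1 := by push_cast; ring
    simp only [hgdef, e1, e2, hU, eval_sub, eval_mul, eval_ofNat, eval_X]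
    have h2σ : 2 * σ * y = x - r := by rw [hy]; field_simp
    rw [hs]
    linear_combination (σ ^ (j + 1) * (Polynomial.Chebyshev.U ℝ ((j : ℤ) + 1)).eval y) * h2σ
  -- P * G = 1
  have hPG : P * G = 1 := by
    ext j
    have hexp : P * G = G + PowerSeries.C (R := ℝ) (r - x) * (PowerSeries.X * G) +
        PowerSeries.C (R := ℝ) s * (PowerSeries.X ^ 2 * G) := by rw [hPdef]; ring
    match j with
    | 0 => rw [hexp]; simp [hexp, hG, hg0]
    | 1 =>
      rw [hexp]
      simp only [hexp, map_add, PowerSeries.coeff_C_mul, PowerSeries.coeff_succ_X_mul, hG,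
        PowerSeries.coeff_mk, PowerSeries.coeff_one]
      have : (PowerSeries.coeff (R := ℝ) 1) (PowerSeries.X ^ 2 * G) = 0 := by
        rw [PowerSeries.coeff_X_pow_mul']
        simp
      rw [this]
      simp [hg0, hg1]
    | (j + 2) =>
      rw [hexp]
      simp only [hexp, map_add, PowerSeries.coeff_C_mul, hG]
      have h1 : (PowerSeries.coeff (R := ℝ) (j + 2)) (PowerSeries.X * PowerSeries.mk g) = g (j + 1) :=
        by rw [PowerSeries.coeff_succ_X_mul, PowerSeries.coeff_mk]
      have h2 : (PowerSeries.coeff (R := ℝ) (j + 2)) (PowerSeries.X ^ 2 * PowerSeries.mk g) = g j := by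
        rw [show j + 2 = j + 2 from rfl, PowerSeries.coeff_X_pow_mul (PowerSeries.mk g) 2 j]
        exact PowerSeries.coeff_mk _ _
      rw [h1, h2, PowerSeries.coeff_mk, PowerSeries.coeff_one, if_neg (by omega : ¬(j + 2 = 0)),
        hgrec j]
      ring
  have hGP : G * P = 1 := by rw [mul_comm]; exact hPG
  set u : PowerSeries ℝ := PowerSeries.C (R := ℝ) x * (PowerSeries.X * Q⁻¹) with hu
  set S : PowerSeries ℝ := ∑ k ∈ Finset.range (m + 2 + 1), u ^ k with hS
  have hsum : ∑ k ∈ Finset.range (m + 2 + 1), d (m + 2) k * x ^ k =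
      PowerSeries.coeff (R := ℝ) (m + 2) (N * Q⁻¹ * S) := by
    rw [hS, Finset.mul_sum, map_sum]
    apply Finset.sum_congr rfl
    intro k _
    rw [hd]
    have he : N * Q⁻¹ * u ^ k =
        PowerSeries.C (R := ℝ) (x ^ k) * (N * Q⁻¹ * (PowerSeries.X * Q⁻¹) ^ k) := by
      rw [hu, mul_pow, map_pow]; ring
    rw [he, PowerSeries.coeff_C_mul]; ring
  have hPQ : P * Q⁻¹ = 1 - u := by
    have hPQX : P = Q - PowerSeries.C (R := ℝ) x * PowerSeries.X := by
      rw [hPdef, hQdef, map_sub]; ring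
    rw [hPQX, sub_mul, hQinv, hu]; ring
  have hgeo : P * Q⁻¹ * S = 1 - u ^ (m + 2 + 1) := by
    have h := mul_geom_sum u (m + 2 + 1)
    rw [hPQ, hS]
    linear_combination -h
  have hQS : N * Q⁻¹ * S = N * G - N * G * u ^ (m + 2 + 1) := by
    have h1 : Q⁻¹ * S = G * (1 - u ^ (m + 2 + 1)) := by
      calc Q⁻¹ * S = (G * P) * (Q⁻¹ * S) := by rw [hGP, one_mul]
      _ = G * (P * Q⁻¹ * S) := by ring
      _ = G * (1 - u ^ (m + 2 + 1)) := by rw [hgeo]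
    calc N * Q⁻¹ * S = N * (Q⁻¹ * S) := by ring
    _ = N * (G * (1 - u ^ (m + 2 + 1))) := by rw [h1]
    _ = N * G - N * G * u ^ (m + 2 + 1) := by ring
  have hzero : PowerSeries.coeff (R := ℝ) (m + 2) (N * G * u ^ (m + 2 + 1)) = 0 := by
    have hdvd : PowerSeries.X ^ (m + 2 + 1) ∣ N * G * u ^ (m + 2 + 1) :=
      ⟨(PowerSeries.C (R := ℝ) x * Q⁻¹) ^ (m + 2 + 1) * (N * G), by rw [hu, mul_pow]; ring⟩
    exact PowerSeries.X_pow_dvd_iff.mp hdvd (m + 2) (by omega)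
  have hNG : PowerSeries.coeff (R := ℝ) (m + 2) (N * G) = g (m + 2) - lam * g (m + 1) - mu * g m := by
    have hexp : N * G = G - PowerSeries.C (R := ℝ) lam * (PowerSeries.X * G) -
        PowerSeries.C (R := ℝ) mu * (PowerSeries.X ^ 2 * G) := by rw [hNdef]; ring
    rw [hexp, map_sub, map_sub, PowerSeries.coeff_C_mul, PowerSeries.coeff_C_mul, hG,
      PowerSeries.coeff_mk, PowerSeries.coeff_succ_X_mul, PowerSeries.coeff_mk,
      PowerSeries.coeff_X_pow_mul (PowerSeries.mk g) 2 m, PowerSeries.coeff_mk]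
  have e1 : ((m + 2 : ℕ) : ℤ) - 1 = ((m + 1 : ℕ) : ℤ) := by push_cast; ring
  have e2 : ((m + 2 : ℕ) : ℤ) - 2 = ((m : ℕ) : ℤ) := by push_cast; ring
  rw [hsum, hQS, map_sub, hzero, sub_zero, hNG, e1, e2,
    show m + 2 - 1 = m + 1 from rfl, show m + 2 - 2 = m from rfl]
  simp only [hgdef]
  ring
end

section
/- Work over the polynomial ring ℚ[y]. Let M_{n,k} ∈ ℚ[y] be the coefficient of xⁿ in (1 + yx + yx²)·(1+x)⁻¹ · (x·(1+x)⁻²)^k, the entries of the Riordan array ((1+yx+yx²)/(1+x), x/(1+x)²). Let (μ_n)_{n≥0} be the unique sequence in ℚ[y] satisfying ∑_{k=0}^{n} M_{n,k}·μ_k = δ_{n,0} for all n (the first column of the inverse matrix, i.e. the moment sequence). Then for every n, μ_n = ∑_{k=0}^{n} t_{n,k}·y^k, where t_{n,k} ∈ ℚ is the coefficient of xⁿ in c·(-x·c³)^k. That is, the coefficient array of the moments of the generalized Chebyshev polynomials defined by ((1+yx+yx²)/(1+x), x/(1+x)²) is the Riordan involution (c, -x·c³). -/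
open PowerSeries Finset

namespace Stmt10Aux

variable {R : Type*} [CommRing R]

/-- Truncated substitution: substitute `F` into the first `n+1` coefficients of `A`. -/
noncomputable def sub (F : PowerSeries R) (n : ℕ) (A : PowerSeries R) : PowerSeries R :=
  Polynomial.eval₂ (PowerSeries.C (R := R)) F (PowerSeries.trunc (n + 1) A)

/-- Congruence modulo `X^(n+1)`. -/
def Cong (n : ℕ) (A B : PowerSeries R) : Prop :=
  (PowerSeries.X : PowerSeries R) ^ (n + 1) ∣ (A - B)

theorem cong_refl (n : ℕ) (A : PowerSeries R) : Cong n A A := by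
  simp [Cong]

theorem cong_symm {n : ℕ} {A B : PowerSeries R} (h : Cong n A B) : Cong n B A := by
  simpa [Cong] using (dvd_neg.mpr h)

theorem cong_trans {n : ℕ} {A B C : PowerSeries R} (h1 : Cong n A B) (h2 : Cong n B C) :
    Cong n A C := by
  simpa [Cong] using dvd_add h1 h2

theorem cong_of_eq {n : ℕ} {A B : PowerSeries R} (h : A = B) : Cong n A B := by
  simp [Cong, h]

theorem cong_coeff {n : ℕ} {A B : PowerSeries R} (h : Cong n A B) {m : ℕ} (hm : m ≤ n) :
    PowerSeries.coeff (R := R) m A = PowerSeries.coeff (R := R) m B := by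
  have h0 : PowerSeries.coeff (R := R) m (A - B) = 0 :=
    PowerSeries.X_pow_dvd_iff.mp h m (by omega)
  rw [map_sub] at h0
  exact sub_eq_zero.mp h0

theorem cong_mul {n : ℕ} {A A' B B' : PowerSeries R} (h : Cong n A A') (h' : Cong n B B') :
    Cong n (A * B) (A' * B') := by
  have : A * B - A' * B' = A * (B - B') + (A - A') * B' := by ring
  rw [Cong, this]
  exact dvd_add (h'.mul_left A) (h.mul_right B')

theorem cong_add {n : ℕ} {A A' B B' : PowerSeries R} (h : Cong n A A') (h' : Cong n B B') :
    Cong n (A + B) (A' + B') := by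
  have : A + B - (A' + B') = (A - A') + (B - B') := by ring
  rw [Cong, this]
  exact dvd_add h h'

theorem sOne (F : PowerSeries R) (n : ℕ) : sub F n 1 = 1 := by
  rw [sub, PowerSeries.trunc_one, Polynomial.eval₂_one]

theorem sC (F : PowerSeries R) (n : ℕ) (r : R) :
    sub F n (PowerSeries.C (R := R) r) = PowerSeries.C (R := R) r := by
  rw [sub, PowerSeries.trunc_C, Polynomial.eval₂_C]

theorem sX (F : PowerSeries R) {n : ℕ} (hn : 1 ≤ n) : sub F n PowerSeries.X = F := by
  obtain ⟨m, rfl⟩ := Nat.exists_eq_add_of_le hn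
  rw [sub, show 1 + m + 1 = m + 2 by ring, PowerSeries.trunc_X, Polynomial.eval₂_X]

theorem sAdd (F : PowerSeries R) (n : ℕ) (A B : PowerSeries R) :
    sub F n (A + B) = sub F n A + sub F n B := by
  rw [sub, sub, sub, map_add, Polynomial.eval₂_add]

theorem sExpand (F : PowerSeries R) (n : ℕ) (A : PowerSeries R) :
    sub F n A = ∑ k ∈ range (n + 1), PowerSeries.C (R := R) (PowerSeries.coeff (R := R) k A) * F ^ k := by
  rw [sub, PowerSeries.eval₂_trunc_eq_sum_range]

theorem X_pow_dvd_of_constantCoeff {F : PowerSeries R} (hF : constantCoeff (R := R) F = 0) (k : ℕ)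
    {s : PowerSeries R} (hs : F ^ k ∣ s) : (PowerSeries.X : PowerSeries R) ^ k ∣ s :=
  dvd_trans (pow_dvd_pow_of_dvd (PowerSeries.X_dvd_iff.mpr hF) k) hs

theorem sMul (F : PowerSeries R) (hF : constantCoeff (R := R) F = 0) (n : ℕ) (A B : PowerSeries R) :
    Cong n (sub F n (A * B)) (sub F n A * sub F n B) := by
  rw [sub, sub, sub, ← Polynomial.eval₂_mul]
  have hd : (PowerSeries.X : PowerSeries R) ^ (n + 1) ∣
      Polynomial.eval₂ (PowerSeries.C (R := R)) F
        (PowerSeries.trunc (n + 1) (A * B) -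
          PowerSeries.trunc (n + 1) A * PowerSeries.trunc (n + 1) B) := by
    obtain ⟨q, hq⟩ : (Polynomial.X : Polynomial R) ^ (n + 1) ∣
        (PowerSeries.trunc (n + 1) (A * B) -
          PowerSeries.trunc (n + 1) A * PowerSeries.trunc (n + 1) B) := by
      rw [Polynomial.X_pow_dvd_iff]
      intro d hd
      rw [Polynomial.coeff_sub,
        PowerSeries.coeff_trunc, if_pos hd,
        ← Polynomial.coeff_coe, Polynomial.coe_mul,
        ← PowerSeries.coeff_mul_eq_coeff_trunc_mul_trunc A B hd, sub_self]
    rw [hq, Polynomial.eval₂_mul, Polynomial.eval₂_pow, Polynomial.eval₂_X]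
    exact Dvd.dvd.mul_right
      (pow_dvd_pow_of_dvd (PowerSeries.X_dvd_iff.mpr hF) (n + 1)) _
  have : Polynomial.eval₂ (PowerSeries.C (R := R)) F (PowerSeries.trunc (n + 1) (A * B)) -
      Polynomial.eval₂ (PowerSeries.C (R := R)) F
        (PowerSeries.trunc (n + 1) A * PowerSeries.trunc (n + 1) B) =
      Polynomial.eval₂ (PowerSeries.C (R := R)) F
        (PowerSeries.trunc (n + 1) (A * B) -
          PowerSeries.trunc (n + 1) A * PowerSeries.trunc (n + 1) B) := by
    rw [Polynomial.eval₂_sub]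
  rw [Cong, this]; exact hd

theorem coeff_zero_of_self {n : ℕ} {F u d : PowerSeries R} (hF : constantCoeff (R := R) F = 0)
    (h : ∀ m ≤ n, PowerSeries.coeff (R := R) m d = PowerSeries.coeff (R := R) m (F * (u * d))) :
    ∀ m ≤ n, PowerSeries.coeff (R := R) m d = 0 := by
  intro m
  induction m using Nat.strong_induction_on with
  | _ m ih =>
    intro hm
    rw [h m hm, PowerSeries.coeff_mul]
    apply Finset.sum_eq_zero
    rintro ⟨i, j⟩ hij
    rw [Finset.HasAntidiagonal.mem_antidiagonal] at hij
    rcases Nat.eq_zero_or_pos i with hi | hi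
    · subst hi
      rw [PowerSeries.coeff_zero_eq_constantCoeff, hF, zero_mul]
    · have hj : j < m := by omega
      rw [PowerSeries.coeff_mul]
      rw [Finset.mul_sum]
      apply Finset.sum_eq_zero
      rintro ⟨p, q⟩ hpq
      rw [Finset.HasAntidiagonal.mem_antidiagonal] at hpq
      have hq : q < m := by omega
      rw [ih q hq (by omega), mul_zero, mul_zero]

theorem cong_unique {n : ℕ} {F a b : PowerSeries R} (hF : constantCoeff (R := R) F = 0)
    (ha : Cong n a (1 + F * a ^ 2)) (hb : b = 1 + F * b ^ 2) : Cong n a b := by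
  have key : ∀ m ≤ n, PowerSeries.coeff (R := R) m (a - b) =
      PowerSeries.coeff (R := R) m (F * ((a + b) * (a - b))) := by
    intro m hm
    have h1 : PowerSeries.coeff (R := R) m (a - (1 + F * a ^ 2)) = 0 := by
      have := cong_coeff ha hm
      rw [map_sub, this, sub_self]
    have h2 : a - b - F * ((a + b) * (a - b)) = (a - (1 + F * a ^ 2)) - (b - (1 + F * b ^ 2)) := by
      ring
    have h3 : PowerSeries.coeff (R := R) m (a - b - F * ((a + b) * (a - b))) = 0 := by
      rw [h2, sub_eq_zero.mpr hb, sub_zero]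
      exact h1
    rw [map_sub] at h3
    exact sub_eq_zero.mp h3
  have hz := coeff_zero_of_self hF key
  rw [Cong, PowerSeries.X_pow_dvd_iff]
  intro m hm
  exact hz m (by omega)

end Stmt10Aux

open Stmt10Aux

/-- The coefficient array of the moments of the generalized Chebyshev
polynomials defined by the Riordan array `((1+yx+yx²)/(1+x), x/(1+x)²)` is the
Riordan involution `(c, -x·c³)`, where `c` is the Catalan generating function. -/
theorem stmt10 (c : PowerSeries ℚ) (hc0 : PowerSeries.constantCoeff (R := ℚ) c = 1)
    (hc : c = 1 + PowerSeries.X * c ^ 2)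
    (v : PowerSeries (Polynomial ℚ)) (hv : (1 + PowerSeries.X) * v = 1)
    (M : ℕ → ℕ → Polynomial ℚ)
    (hM : ∀ n k : ℕ, M n k =
      PowerSeries.coeff (R := Polynomial ℚ) n
        ((1 + PowerSeries.C (R := Polynomial ℚ) Polynomial.X * PowerSeries.X +
            PowerSeries.C (R := Polynomial ℚ) Polynomial.X * PowerSeries.X ^ 2) * v *
          (PowerSeries.X * v ^ 2) ^ k))
    (μ : ℕ → Polynomial ℚ)
    (hμ : ∀ n : ℕ, ∑ k ∈ Finset.range (n + 1), M n k * μ k = if n = 0 then 1 else 0) :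
    ∀ n : ℕ, μ n = ∑ k ∈ Finset.range (n + 1),
      Polynomial.C (PowerSeries.coeff (R := ℚ) n (c * (-(PowerSeries.X * c ^ 3)) ^ k)) *
        Polynomial.X ^ k := by
  classical
  set ν : ℕ → Polynomial ℚ := fun k => ∑ j ∈ Finset.range (k + 1),
      Polynomial.C (PowerSeries.coeff (R := ℚ) k (c * (-(PowerSeries.X * c ^ 3)) ^ j)) *
        Polynomial.X ^ j with hν
  set cm : PowerSeries (Polynomial ℚ) :=
    PowerSeries.map (Polynomial.C : ℚ →+* Polynomial ℚ) c with hcm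
  have hcmeq : cm = 1 + PowerSeries.X * cm ^ 2 := by
    rw [hcm]
    conv_lhs => rw [hc]
    simp [map_add, map_one, map_mul, map_pow, PowerSeries.map_X]
  have hv0 : constantCoeff (R := Polynomial ℚ) v = 1 := by
    have := congrArg (constantCoeff (R := Polynomial ℚ)) hv
    simpa using this
  set F : PowerSeries (Polynomial ℚ) := PowerSeries.X * v ^ 2 with hF
  have hF0 : constantCoeff (R := Polynomial ℚ) F = 0 := by simp [hF]
  have hvX : v * (1 + PowerSeries.X) = 1 := by linear_combination hv
  have idA' : F * (1 + PowerSeries.X) ^ 2 = PowerSeries.X := by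
    rw [hF]
    linear_combination (PowerSeries.X * ((1 + PowerSeries.X) * v + 1)) * hv
  have idB : F * (1 + PowerSeries.X) ^ 3 = PowerSeries.X + PowerSeries.X ^ 2 := by
    rw [hF]
    linear_combination (PowerSeries.X * (1 + PowerSeries.X) * ((1 + PowerSeries.X) * v + 1)) * hv
  set D : PowerSeries (Polynomial ℚ) :=
    1 + PowerSeries.C (R := Polynomial ℚ) Polynomial.X * (PowerSeries.X * cm ^ 3) with hD
  have hD0 : constantCoeff (R := Polynomial ℚ) D = 1 := by simp [hD]
  set H : PowerSeries (Polynomial ℚ) := cm * PowerSeries.invOfUnit D 1 with hH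
  have hDH : D * H = cm := by
    rw [hH, show D * (cm * PowerSeries.invOfUnit D 1) = cm * (D * PowerSeries.invOfUnit D 1) by
      ring, PowerSeries.mul_invOfUnit D 1 (by rw [hD0]; rfl), mul_one]
  have hHcoeff : ∀ k : ℕ, PowerSeries.coeff (R := Polynomial ℚ) k H = ν k := by
    intro k
    set P : PowerSeries (Polynomial ℚ) :=
      PowerSeries.C (R := Polynomial ℚ) Polynomial.X * (PowerSeries.X * cm ^ 3) with hP
    have hgs : (∑ i ∈ Finset.range (k + 1), (-P) ^ i) * (1 + P) = 1 - (-P) ^ (k + 1) := by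
      have h := geom_sum_mul (-P) (k + 1)
      linear_combination -h
    have h1 : cm * (∑ i ∈ Finset.range (k + 1), (-P) ^ i) = H - H * (-P) ^ (k + 1) := by
      calc cm * (∑ i ∈ Finset.range (k + 1), (-P) ^ i)
          = H * ((∑ i ∈ Finset.range (k + 1), (-P) ^ i) * (1 + P)) := by
            rw [← hDH, hD]; ring
        _ = H - H * (-P) ^ (k + 1) := by rw [hgs]; ring
    have hXP : (PowerSeries.X : PowerSeries (Polynomial ℚ)) ∣ P :=
      ⟨PowerSeries.C (R := Polynomial ℚ) Polynomial.X * cm ^ 3, by rw [hP]; ring⟩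
    have h2 : PowerSeries.coeff (R := Polynomial ℚ) k (H * (-P) ^ (k + 1)) = 0 := by
      have hdvd : (PowerSeries.X : PowerSeries (Polynomial ℚ)) ^ (k + 1) ∣
          H * (-P) ^ (k + 1) := by
        apply Dvd.dvd.mul_left
        rw [show ((-P) ^ (k + 1) : PowerSeries (Polynomial ℚ)) =
          (-1) ^ (k + 1) * P ^ (k + 1) by rw [neg_pow]]
        exact Dvd.dvd.mul_left (pow_dvd_pow_of_dvd hXP (k + 1)) _
      exact PowerSeries.X_pow_dvd_iff.mp hdvd k (by omega)
    have h3 := congrArg (PowerSeries.coeff (R := Polynomial ℚ) k) h1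
    rw [map_sub, h2, sub_zero] at h3
    rw [← h3, Finset.mul_sum, map_sum, hν]
    apply Finset.sum_congr rfl
    intro i _
    have hmap : cm * (-P) ^ i =
        PowerSeries.C (R := Polynomial ℚ) (Polynomial.X ^ i) *
          PowerSeries.map (Polynomial.C : ℚ →+* Polynomial ℚ)
            (c * (-(PowerSeries.X * c ^ 3)) ^ i) := by
      rw [hP, hcm]
      rw [map_pow (PowerSeries.C (R := Polynomial ℚ)) Polynomial.X i]
      simp only [map_mul, map_pow, map_neg, PowerSeries.map_X]
      ring
    rw [hmap, PowerSeries.coeff_C_mul, PowerSeries.coeff_map]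
    rw [mul_comm]
  have hMnn : ∀ n : ℕ, M n n = 1 := by
    intro n
    rw [hM n n, hF]
    rw [show (1 + PowerSeries.C (R := Polynomial ℚ) Polynomial.X * PowerSeries.X +
        PowerSeries.C (R := Polynomial ℚ) Polynomial.X * PowerSeries.X ^ 2) * v *
        (PowerSeries.X * v ^ 2) ^ n =
        PowerSeries.X ^ n * ((1 + PowerSeries.C (R := Polynomial ℚ) Polynomial.X * PowerSeries.X +
          PowerSeries.C (R := Polynomial ℚ) Polynomial.X * PowerSeries.X ^ 2) * v * (v ^ 2) ^ n)
        from by rw [mul_pow]; ring]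
    have h0 := PowerSeries.coeff_X_pow_mul
      ((1 + PowerSeries.C (R := Polynomial ℚ) Polynomial.X * PowerSeries.X +
        PowerSeries.C (R := Polynomial ℚ) Polynomial.X * PowerSeries.X ^ 2) * v * (v ^ 2) ^ n) n 0
    rw [zero_add] at h0
    rw [h0]
    simp [PowerSeries.coeff_zero_eq_constantCoeff, map_mul, map_add, map_pow, hv0]
  have hkey : ∀ n : ℕ, ∑ k ∈ Finset.range (n + 1), M n k * ν k = if n = 0 then 1 else 0 := by
    intro n
    rcases Nat.eq_zero_or_pos n with rfl | hn1
    · rw [if_pos rfl]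
      rw [Finset.range_one, Finset.sum_singleton, hMnn 0, one_mul]
      rw [hν]
      simp [hc0]
    · -- the substituted Catalan series is 1 + X
      have hb : (1 + PowerSeries.X : PowerSeries (Polynomial ℚ)) =
          1 + F * (1 + PowerSeries.X) ^ 2 := by rw [idA']
      have hsq : Cong n (sub F n (cm ^ 2)) (sub F n cm ^ 2) := by
        rw [show cm ^ 2 = cm * cm from sq cm,
          show (sub F n cm) ^ 2 = sub F n cm * sub F n cm from sq _]
        exact sMul F hF0 n cm cm
      have ha : Cong n (sub F n cm) (1 + F * (sub F n cm) ^ 2) := by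
        have e1 : sub F n cm = 1 + sub F n (PowerSeries.X * cm ^ 2) := by
          conv_lhs => rw [hcmeq]
          rw [sAdd, sOne]
        have e2 : Cong n (sub F n (PowerSeries.X * cm ^ 2)) (F * (sub F n cm) ^ 2) := by
          apply cong_trans (sMul F hF0 n PowerSeries.X (cm ^ 2))
          rw [sX F hn1]
          exact cong_mul (cong_refl n F) hsq
        exact cong_trans (cong_of_eq e1) (cong_add (cong_refl n 1) e2)
      have hsubc : Cong n (sub F n cm) (1 + PowerSeries.X) := cong_unique hF0 ha hb
      have hsubDH : Cong n (sub F n D * sub F n H) (1 + PowerSeries.X) := by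
        apply cong_trans (cong_symm (sMul F hF0 n D H))
        rw [hDH]
        exact hsubc
      have hsq2 : Cong n (sub F n (cm ^ 2)) ((1 + PowerSeries.X) ^ 2) := by
        rw [show ((1 + PowerSeries.X : PowerSeries (Polynomial ℚ))) ^ 2 =
          (1 + PowerSeries.X) * (1 + PowerSeries.X) from sq _]
        exact cong_trans hsq
          (by rw [show (sub F n cm) ^ 2 = sub F n cm * sub F n cm from sq _]
              exact cong_mul hsubc hsubc)
      have hcube : Cong n (sub F n (cm ^ 3)) ((1 + PowerSeries.X) ^ 3) := by
        rw [show cm ^ 3 = cm * cm ^ 2 from by ring,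
          show ((1 + PowerSeries.X : PowerSeries (Polynomial ℚ))) ^ 3 =
            (1 + PowerSeries.X) * (1 + PowerSeries.X) ^ 2 from by ring]
        exact cong_trans (sMul F hF0 n cm (cm ^ 2)) (cong_mul hsubc hsq2)
      have hXc3 : Cong n (sub F n (PowerSeries.X * cm ^ 3))
          (PowerSeries.X + PowerSeries.X ^ 2) := by
        apply cong_trans (sMul F hF0 n PowerSeries.X (cm ^ 3))
        rw [sX F hn1]
        exact cong_trans (cong_mul (cong_refl n F) hcube) (cong_of_eq idB)
      have hsubD : Cong n (sub F n D)
          (1 + PowerSeries.C (R := Polynomial ℚ) Polynomial.X *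
            (PowerSeries.X + PowerSeries.X ^ 2)) := by
        rw [hD, sAdd, sOne]
        apply cong_add (cong_refl n 1)
        apply cong_trans (sMul F hF0 n (PowerSeries.C (R := Polynomial ℚ) Polynomial.X)
          (PowerSeries.X * cm ^ 3))
        rw [sC]
        exact cong_mul (cong_refl n _) hXc3
      have hGH : Cong n ((1 + PowerSeries.C (R := Polynomial ℚ) Polynomial.X * PowerSeries.X +
          PowerSeries.C (R := Polynomial ℚ) Polynomial.X * PowerSeries.X ^ 2) * sub F n H)
          (1 + PowerSeries.X) := by
        rw [show (1 + PowerSeries.C (R := Polynomial ℚ) Polynomial.X * PowerSeries.X +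
          PowerSeries.C (R := Polynomial ℚ) Polynomial.X * PowerSeries.X ^ 2 :
            PowerSeries (Polynomial ℚ)) =
          1 + PowerSeries.C (R := Polynomial ℚ) Polynomial.X *
            (PowerSeries.X + PowerSeries.X ^ 2) from by ring]
        exact cong_trans (cong_mul (cong_symm hsubD) (cong_refl n (sub F n H))) hsubDH
      have h5 : PowerSeries.coeff (R := Polynomial ℚ) n
          ((1 + PowerSeries.C (R := Polynomial ℚ) Polynomial.X * PowerSeries.X +
            PowerSeries.C (R := Polynomial ℚ) Polynomial.X * PowerSeries.X ^ 2) * v *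
            sub F n H) = 0 := by
        rw [show (1 + PowerSeries.C (R := Polynomial ℚ) Polynomial.X * PowerSeries.X +
            PowerSeries.C (R := Polynomial ℚ) Polynomial.X * PowerSeries.X ^ 2) * v * sub F n H =
          v * ((1 + PowerSeries.C (R := Polynomial ℚ) Polynomial.X * PowerSeries.X +
            PowerSeries.C (R := Polynomial ℚ) Polynomial.X * PowerSeries.X ^ 2) * sub F n H)
          from by ring]
        rw [cong_coeff (cong_mul (cong_refl n v) hGH) (le_refl n)]
        rw [hvX]
        rw [PowerSeries.coeff_one, if_neg (by omega)]
      have h6 : PowerSeries.coeff (R := Polynomial ℚ) n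
          ((1 + PowerSeries.C (R := Polynomial ℚ) Polynomial.X * PowerSeries.X +
            PowerSeries.C (R := Polynomial ℚ) Polynomial.X * PowerSeries.X ^ 2) * v *
            sub F n H) = ∑ k ∈ Finset.range (n + 1), M n k * ν k := by
        rw [sExpand, Finset.mul_sum, map_sum]
        apply Finset.sum_congr rfl
        intro k _
        rw [hHcoeff k]
        rw [show (1 + PowerSeries.C (R := Polynomial ℚ) Polynomial.X * PowerSeries.X +
            PowerSeries.C (R := Polynomial ℚ) Polynomial.X * PowerSeries.X ^ 2) * v *
            (PowerSeries.C (R := Polynomial ℚ) (ν k) * F ^ k) =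
          PowerSeries.C (R := Polynomial ℚ) (ν k) *
            ((1 + PowerSeries.C (R := Polynomial ℚ) Polynomial.X * PowerSeries.X +
              PowerSeries.C (R := Polynomial ℚ) Polynomial.X * PowerSeries.X ^ 2) * v * F ^ k)
          from by ring]
        rw [PowerSeries.coeff_C_mul, ← hM n k, mul_comm]
      rw [← h6, h5, if_neg (by omega)]
  intro n
  induction n using Nat.strong_induction_on with
  | _ n ih =>
    show μ n = ν n
    have h1 := hμ n
    have h2 := hkey n
    rw [Finset.sum_range_succ] at h1 h2
    have h3 : ∑ k ∈ Finset.range n, M n k * μ k = ∑ k ∈ Finset.range n, M n k * ν k :=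
      Finset.sum_congr rfl fun k hk => by rw [ih k (Finset.mem_range.mp hk)]
    have h4 : M n n * μ n = M n n * ν n := by
      have h5 := h1.trans h2.symm
      rw [h3] at h5
      exact add_left_cancel h5
    rw [hMnn n, one_mul, one_mul] at h4
    exact h4
end

section
/- Work over the polynomial ring ℚ[y]. Let M_{n,k} ∈ ℚ[y] be the coefficient of xⁿ in (1 + yx + yx²)·(1+x)⁻² · (x·(1+x)⁻²)^k, the entries of the Riordan array ((1+yx+yx²)/(1+x)², x/(1+x)²). Let (μ_n)_{n≥0} be the unique sequence in ℚ[y] satisfying ∑_{k=0}^{n} M_{n,k}·μ_k = δ_{n,0} for all n (the first column of the inverse matrix, i.e. the moment sequence). Then for every n, μ_n = ∑_{k=0}^{n} t_{n,k}·y^k, where t_{n,k} ∈ ℚ is the coefficient of xⁿ in c²·(-x·c³)^k. That is, the coefficient array of the moments of the generalized Chebyshev polynomials defined by ((1+yx+yx²)/(1+x)², x/(1+x)²) is the Riordan involution (c², -x·c³). -/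
open PowerSeries Finset

namespace Stmt11Aux

variable {R : Type*} [CommRing R]

noncomputable def ev (F : PowerSeries R) (p : Polynomial R) : PowerSeries R :=
  p.eval₂ (PowerSeries.C (R := R)) F

noncomputable def Phi (F : PowerSeries R) (n : ℕ) (f : PowerSeries R) : PowerSeries R :=
  ev F (PowerSeries.trunc (n + 1) f)

lemma coeff_ev_zero {F : PowerSeries R} (hF : (PowerSeries.X : PowerSeries R) ∣ F) {n : ℕ}
    {p : Polynomial R} (hp : ∀ k ≤ n, p.coeff k = 0) {m : ℕ} (hm : m ≤ n) :
    PowerSeries.coeff (R := R) m (ev F p) = 0 := by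
  rw [ev, Polynomial.eval₂_eq_sum, Polynomial.sum, map_sum]
  apply Finset.sum_eq_zero
  intro k hk
  have hk' : n < k := by
    by_contra h
    exact (Polynomial.mem_support_iff.mp hk) (hp k (le_of_not_gt h))
  have hdvd : (PowerSeries.X : PowerSeries R) ^ k ∣ PowerSeries.C (R := R) (p.coeff k) * F ^ k :=
    Dvd.dvd.mul_left (pow_dvd_pow_of_dvd hF k) _
  exact (PowerSeries.X_pow_dvd_iff.mp hdvd) m (lt_of_le_of_lt hm hk')

lemma mulcong {n : ℕ} {f f' g g' : PowerSeries R}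
    (hf : ∀ a ≤ n, PowerSeries.coeff (R := R) a f = PowerSeries.coeff (R := R) a f')
    (hg : ∀ b ≤ n, PowerSeries.coeff (R := R) b g = PowerSeries.coeff (R := R) b g') :
    ∀ m ≤ n, PowerSeries.coeff (R := R) m (f * g) = PowerSeries.coeff (R := R) m (f' * g') := by
  intro m hm
  rw [PowerSeries.coeff_mul, PowerSeries.coeff_mul]
  refine Finset.sum_congr rfl fun p hp => ?_
  rw [Finset.HasAntidiagonal.mem_antidiagonal] at hp
  have h1 : p.1 ≤ n := le_trans (Nat.le.intro hp) hm
  have h2 : p.2 ≤ n := le_trans (Nat.le.intro (by omega : p.2 + p.1 = m)) hm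
  rw [hf p.1 h1, hg p.2 h2]

lemma Phi_mul_coeff {F : PowerSeries R} (hF : (PowerSeries.X : PowerSeries R) ∣ F) {n : ℕ}
    (f g : PowerSeries R) :
    ∀ m ≤ n, PowerSeries.coeff (R := R) m (Phi F n (f * g)) =
      PowerSeries.coeff (R := R) m (Phi F n f * Phi F n g) := by
  intro m hm
  have key : Phi F n f * Phi F n g = ev F (trunc (n + 1) f * trunc (n + 1) g) := by
    rw [ev, Polynomial.eval₂_mul]; rfl
  have hzero : ∀ k ≤ n,
      ((trunc (n + 1) f * trunc (n + 1) g) - trunc (n + 1) (f * g)).coeff k = 0 := by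
    intro k hk
    rw [Polynomial.coeff_sub, PowerSeries.coeff_trunc, if_pos (Nat.lt_succ_of_le hk),
      ← Polynomial.coeff_coe, Polynomial.coe_mul,
      ← PowerSeries.coeff_mul_eq_coeff_trunc_mul_trunc f g (Nat.lt_succ_of_le hk), sub_self]
  have h2 := coeff_ev_zero hF hzero hm
  rw [ev, Polynomial.eval₂_sub, map_sub, sub_eq_zero] at h2
  rw [key, ev]
  exact h2.symm

lemma Phi_one (F : PowerSeries R) (n : ℕ) : Phi F n 1 = 1 := by
  rw [Phi, trunc_one, ev, Polynomial.eval₂_one]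

lemma Phi_X (F : PowerSeries R) {n : ℕ} (hn : 1 ≤ n) : Phi F n PowerSeries.X = F := by
  rw [Phi, trunc_X_of (by omega), ev, Polynomial.eval₂_X]

lemma trunc_neg (n : ℕ) (f : PowerSeries R) : trunc n (-f) = - trunc n f := by
  ext k
  rw [Polynomial.coeff_neg, PowerSeries.coeff_trunc, PowerSeries.coeff_trunc]
  split_ifs with h
  · rw [map_neg]
  · rw [neg_zero]

lemma Phi_add (F : PowerSeries R) (n : ℕ) (f g : PowerSeries R) :
    Phi F n (f + g) = Phi F n f + Phi F n g := by
  rw [Phi, map_add, ev, Polynomial.eval₂_add]; rfl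

lemma Phi_neg (F : PowerSeries R) (n : ℕ) (f : PowerSeries R) :
    Phi F n (-f) = - Phi F n f := by
  rw [Phi, trunc_neg, ev, Polynomial.eval₂_neg]; rfl

lemma Phi_congr_mul {F : PowerSeries R} (hF : (PowerSeries.X : PowerSeries R) ∣ F) {n : ℕ}
    {f f' g g' : PowerSeries R}
    (h1 : ∀ m ≤ n, PowerSeries.coeff (R := R) m (Phi F n f) = PowerSeries.coeff (R := R) m f')
    (h2 : ∀ m ≤ n, PowerSeries.coeff (R := R) m (Phi F n g) = PowerSeries.coeff (R := R) m g') :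
    ∀ m ≤ n, PowerSeries.coeff (R := R) m (Phi F n (f * g)) = PowerSeries.coeff (R := R) m (f' * g') :=
  fun m hm => (Phi_mul_coeff hF f g m hm).trans (mulcong h1 h2 m hm)

lemma Phi_congr_pow {F : PowerSeries R} (hF : (PowerSeries.X : PowerSeries R) ∣ F) {n : ℕ}
    {f f' : PowerSeries R}
    (h : ∀ m ≤ n, PowerSeries.coeff (R := R) m (Phi F n f) = PowerSeries.coeff (R := R) m f') (i : ℕ) :
    ∀ m ≤ n, PowerSeries.coeff (R := R) m (Phi F n (f ^ i)) = PowerSeries.coeff (R := R) m (f' ^ i) := by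
  induction i with
  | zero => intro m hm; rw [pow_zero, pow_zero, Phi_one]
  | succ i ih =>
    intro m hm
    rw [pow_succ, pow_succ]
    exact Phi_congr_mul hF ih h m hm

lemma Phi_congr_neg {F : PowerSeries R} {n : ℕ} {f f' : PowerSeries R}
    (h : ∀ m ≤ n, PowerSeries.coeff (R := R) m (Phi F n f) = PowerSeries.coeff (R := R) m f') :
    ∀ m ≤ n, PowerSeries.coeff (R := R) m (Phi F n (-f)) = PowerSeries.coeff (R := R) m (-f') := by
  intro m hm
  rw [Phi_neg, map_neg, map_neg, h m hm]

lemma Phi_eq_sum (F : PowerSeries R) (n : ℕ) (f : PowerSeries R) :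
    Phi F n f = ∑ k ∈ range (n + 1), PowerSeries.C (R := R) (PowerSeries.coeff (R := R) k f) * F ^ k := by
  rw [Phi, ev]
  have ht : trunc (n + 1) f =
      ∑ k ∈ range (n + 1), Polynomial.monomial k (PowerSeries.coeff (R := R) k f) := by
    ext j
    rw [PowerSeries.coeff_trunc, Polynomial.finset_sum_coeff]
    simp only [Polynomial.coeff_monomial]
    rw [Finset.sum_ite_eq' (range (n + 1)) j]
    simp [Finset.mem_range, Nat.lt_succ_iff]
  rw [ht, Polynomial.eval₂_finset_sum]
  exact Finset.sum_congr rfl fun k _ => Polynomial.eval₂_monomial _ _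

lemma phi_catalan {v F C' : PowerSeries R} (hv : (1 + PowerSeries.X) * v = 1)
    (hF : F = PowerSeries.X * v ^ 2) (hC' : C' = 1 + PowerSeries.X * C' ^ 2) {n : ℕ}
    (hn : 1 ≤ n) :
    ∀ m ≤ n, PowerSeries.coeff (R := R) m (Phi F n C') =
      PowerSeries.coeff (R := R) m (1 + PowerSeries.X) := by
  have hFdvd : (PowerSeries.X : PowerSeries R) ∣ F := ⟨v ^ 2, hF⟩
  set g := Phi F n C' with hg
  have hrec : ∀ m ≤ n, PowerSeries.coeff (R := R) m g =
      PowerSeries.coeff (R := R) m (1 : PowerSeries R) + PowerSeries.coeff (R := R) m (F * (g * g)) := by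
    intro m hm
    have e0 : (1 : PowerSeries R) + PowerSeries.X * (C' * C') = C' := by
      conv_rhs => rw [hC']
      ring
    have e1 : PowerSeries.coeff (R := R) m g =
        PowerSeries.coeff (R := R) m (Phi F n (1 + PowerSeries.X * (C' * C'))) := by
      rw [hg, e0]
    rw [e1, Phi_add, map_add, Phi_one]
    congr 1
    refine Phi_congr_mul hFdvd (fun a _ => by rw [Phi_X F hn]) ?_ m hm
    intro b hb
    exact Phi_mul_coeff hFdvd C' C' b hb
  have hrec2 : ∀ m : ℕ, PowerSeries.coeff (R := R) m (1 + PowerSeries.X : PowerSeries R) =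
      PowerSeries.coeff (R := R) m (1 : PowerSeries R) +
        PowerSeries.coeff (R := R) m (F * ((1 + PowerSeries.X) * (1 + PowerSeries.X))) := by
    intro m
    have e : F * ((1 + PowerSeries.X) * (1 + PowerSeries.X)) = PowerSeries.X := by
      rw [hF]
      calc PowerSeries.X * v ^ 2 * ((1 + PowerSeries.X) * (1 + PowerSeries.X))
          = PowerSeries.X * ((1 + PowerSeries.X) * v) ^ 2 := by ring
        _ = PowerSeries.X := by rw [hv]; ring
    rw [e, map_add]
  intro m
  induction m using Nat.strong_induction_on with
  | _ m IH =>
    intro hm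
    rw [hrec m hm, hrec2 m]
    congr 1
    have hfac : F * (g * g) - F * ((1 + PowerSeries.X) * (1 + PowerSeries.X)) =
        (F * (g + (1 + PowerSeries.X))) * (g - (1 + PowerSeries.X)) := by ring
    have hz : PowerSeries.coeff (R := R) m
        ((F * (g + (1 + PowerSeries.X))) * (g - (1 + PowerSeries.X))) = 0 := by
      rw [PowerSeries.coeff_mul]
      apply Finset.sum_eq_zero
      intro p hp
      rw [Finset.HasAntidiagonal.mem_antidiagonal] at hp
      rcases Nat.lt_or_ge p.2 m with h2 | h2
      · rw [map_sub, IH p.2 h2 (le_trans (le_of_lt h2) hm), sub_self, mul_zero]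
      · have hp2 : p.2 = m := by omega
        have hp1 : p.1 = 0 := by omega
        have hc0 : PowerSeries.coeff (R := R) 0 (F * (g + (1 + PowerSeries.X))) = 0 := by
          rw [PowerSeries.coeff_zero_eq_constantCoeff, map_mul, hF, map_mul,
            PowerSeries.constantCoeff_X, zero_mul, zero_mul]
        rw [hp1, hc0, zero_mul]
    have hd : PowerSeries.coeff (R := R) m (F * (g * g)) -
        PowerSeries.coeff (R := R) m (F * ((1 + PowerSeries.X) * (1 + PowerSeries.X))) = 0 := by
      rw [← map_sub, hfac]; exact hz
    exact sub_eq_zero.mp hd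
end Stmt11Aux

open Stmt11Aux

/-- The coefficient array of the moments of the generalized Chebyshev
polynomials defined by the Riordan array `((1+yx+yx²)/(1+x)², x/(1+x)²)` is the
Riordan involution `(c², -x·c³)`, where `c` is the Catalan generating function. -/
theorem stmt11 (c : PowerSeries ℚ) (hc0 : PowerSeries.constantCoeff (R := ℚ) c = 1)
    (hc : c = 1 + PowerSeries.X * c ^ 2)
    (v : PowerSeries (Polynomial ℚ)) (hv : (1 + PowerSeries.X) * v = 1)
    (M : ℕ → ℕ → Polynomial ℚ)
    (hM : ∀ n k : ℕ, M n k =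
      PowerSeries.coeff (R := Polynomial ℚ) n
        ((1 + PowerSeries.C (R := Polynomial ℚ) Polynomial.X * PowerSeries.X +
            PowerSeries.C (R := Polynomial ℚ) Polynomial.X * PowerSeries.X ^ 2) * v ^ 2 *
          (PowerSeries.X * v ^ 2) ^ k))
    (μ : ℕ → Polynomial ℚ)
    (hμ : ∀ n : ℕ, ∑ k ∈ Finset.range (n + 1), M n k * μ k = if n = 0 then 1 else 0) :
    ∀ n : ℕ, μ n = ∑ k ∈ Finset.range (n + 1),
      Polynomial.C (PowerSeries.coeff (R := ℚ) n (c ^ 2 * (-(PowerSeries.X * c ^ 3)) ^ k)) *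
        Polynomial.X ^ k := by
  set ν : ℕ → Polynomial ℚ := fun k => ∑ j ∈ Finset.range (k + 1),
      Polynomial.C (PowerSeries.coeff (R := ℚ) k (c ^ 2 * (-(PowerSeries.X * c ^ 3)) ^ j)) *
        Polynomial.X ^ j with hν
  -- constant coefficient of v
  have hvc : PowerSeries.constantCoeff (R := Polynomial ℚ) v = 1 := by
    have := congrArg (PowerSeries.constantCoeff (R := Polynomial ℚ)) hv
    simpa using this
  -- the mapped Catalan series
  set c' : PowerSeries (Polynomial ℚ) := PowerSeries.map (Polynomial.C : ℚ →+* Polynomial ℚ) c with hcm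
  have hc' : c' = 1 + PowerSeries.X * c' ^ 2 := by
    rw [hcm]
    conv_lhs => rw [hc]
    simp [map_add, map_mul, map_pow, map_one, PowerSeries.map_X]
  set F : PowerSeries (Polynomial ℚ) := PowerSeries.X * v ^ 2 with hF
  set G : PowerSeries (Polynomial ℚ) := (1 + PowerSeries.C (R := Polynomial ℚ) Polynomial.X * PowerSeries.X +
      PowerSeries.C (R := Polynomial ℚ) Polynomial.X * PowerSeries.X ^ 2) * v ^ 2 with hG
  have hXdvdF : (PowerSeries.X : PowerSeries (Polynomial ℚ)) ∣ F := ⟨v ^ 2, hF⟩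
  -- M n n = 1
  have hMnn : ∀ n : ℕ, M n n = 1 := by
    intro n
    rw [hM n n]
    have e : G * F ^ n = PowerSeries.X ^ n * (G * (v ^ 2) ^ n) := by rw [hF]; ring
    rw [e]
    have e2 := PowerSeries.coeff_X_pow_mul (G * (v ^ 2) ^ n) n 0
    rw [zero_add] at e2
    rw [e2, PowerSeries.coeff_zero_eq_constantCoeff, hG]
    simp [hvc]
  -- the master identity
  have master : ∀ N : ℕ, ∑ k ∈ Finset.range (N + 1), M N k * ν k
      = if N = 0 then 1 else 0 := by
    intro N
    rcases Nat.eq_zero_or_pos N with hN | hN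
    · subst hN
      rw [Finset.sum_range_one, hMnn 0, one_mul, if_pos rfl, hν]
      simp [Finset.sum_range_one, map_mul, map_pow, hc0]
    · have hN1 : 1 ≤ N := hN
      -- extend each ν k to a sum over range (N+1)
      have hνext : ∀ k ≤ N, ν k = ∑ j ∈ Finset.range (N + 1),
          Polynomial.C (PowerSeries.coeff (R := ℚ) k (c ^ 2 * (-(PowerSeries.X * c ^ 3)) ^ j)) *
            Polynomial.X ^ j := by
        intro k hk
        rw [hν]
        apply Finset.sum_subset
        · intro j hj
          simp only [Finset.mem_range] at *
          omega
        · intro j hjN hjk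
          have hkj : k < j := by
            simp only [Finset.mem_range] at hjN hjk
            omega
          have hdvd : (PowerSeries.X : PowerSeries ℚ) ^ j ∣
              c ^ 2 * (-(PowerSeries.X * c ^ 3)) ^ j := ⟨(-(c ^ 3)) ^ j * c ^ 2, by ring⟩
          rw [PowerSeries.X_pow_dvd_iff.mp hdvd k hkj, map_zero, zero_mul]
      -- the key congruence for each j
      have hcat := phi_catalan hv hF hc' hN1
      have hSj : ∀ j : ℕ, ∀ m ≤ N, PowerSeries.coeff (R := Polynomial ℚ) m
          (Phi F N (c' ^ 2 * (-(PowerSeries.X * c' ^ 3)) ^ j)) =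
          PowerSeries.coeff (R := Polynomial ℚ) m ((1 + PowerSeries.X) ^ 2 *
            (-(F * (1 + PowerSeries.X) ^ 3)) ^ j) := by
        intro j
        refine Phi_congr_mul hXdvdF (Phi_congr_pow hXdvdF hcat 2) ?_
        refine Phi_congr_pow hXdvdF ?_ j
        refine Phi_congr_neg ?_
        refine Phi_congr_mul hXdvdF (fun a _ => by rw [Phi_X F hN1]) ?_
        exact Phi_congr_pow hXdvdF hcat 3
      -- inner sums
      have hmap : ∀ j k : ℕ, PowerSeries.coeff (R := Polynomial ℚ) k
          (c' ^ 2 * (-(PowerSeries.X * c' ^ 3)) ^ j) =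
          Polynomial.C (PowerSeries.coeff (R := ℚ) k (c ^ 2 * (-(PowerSeries.X * c ^ 3)) ^ j)) := by
        intro j k
        have e : c' ^ 2 * (-(PowerSeries.X * c' ^ 3)) ^ j =
            PowerSeries.map (Polynomial.C : ℚ →+* Polynomial ℚ)
              (c ^ 2 * (-(PowerSeries.X * c ^ 3)) ^ j) := by
          rw [hcm]
          simp [map_mul, map_pow, map_neg, PowerSeries.map_X]
        rw [e, PowerSeries.coeff_map]
      have hinner : ∀ j : ℕ, ∑ k ∈ Finset.range (N + 1),
          Polynomial.C (PowerSeries.coeff (R := ℚ) k (c ^ 2 * (-(PowerSeries.X * c ^ 3)) ^ j)) * M N k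
          = PowerSeries.coeff (R := Polynomial ℚ) N (G * ((1 + PowerSeries.X) ^ 2 *
              (-(F * (1 + PowerSeries.X) ^ 3)) ^ j)) := by
        intro j
        have step1 : ∀ k, Polynomial.C
            (PowerSeries.coeff (R := ℚ) k (c ^ 2 * (-(PowerSeries.X * c ^ 3)) ^ j)) * M N k =
            PowerSeries.coeff (R := Polynomial ℚ) N (G * (PowerSeries.C (R := Polynomial ℚ) (PowerSeries.coeff (R := Polynomial ℚ) k
              (c' ^ 2 * (-(PowerSeries.X * c' ^ 3)) ^ j)) * F ^ k)) := by
          intro k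
          rw [hM N k, hmap j k]
          rw [show G * (PowerSeries.C (R := Polynomial ℚ) (Polynomial.C (PowerSeries.coeff (R := ℚ) k
              (c ^ 2 * (-(PowerSeries.X * c ^ 3)) ^ j))) * F ^ k) =
            PowerSeries.C (R := Polynomial ℚ) (Polynomial.C (PowerSeries.coeff (R := ℚ) k
              (c ^ 2 * (-(PowerSeries.X * c ^ 3)) ^ j))) * (G * F ^ k) from by ring]
          rw [PowerSeries.coeff_C_mul]
        calc ∑ k ∈ Finset.range (N + 1),
            Polynomial.C (PowerSeries.coeff (R := ℚ) k (c ^ 2 * (-(PowerSeries.X * c ^ 3)) ^ j)) * M N k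
            = ∑ k ∈ Finset.range (N + 1), PowerSeries.coeff (R := Polynomial ℚ) N
                (G * (PowerSeries.C (R := Polynomial ℚ) (PowerSeries.coeff (R := Polynomial ℚ) k
                  (c' ^ 2 * (-(PowerSeries.X * c' ^ 3)) ^ j)) * F ^ k)) :=
              Finset.sum_congr rfl fun k _ => step1 k
          _ = PowerSeries.coeff (R := Polynomial ℚ) N (G * ∑ k ∈ Finset.range (N + 1),
                PowerSeries.C (R := Polynomial ℚ) (PowerSeries.coeff (R := Polynomial ℚ) k
                  (c' ^ 2 * (-(PowerSeries.X * c' ^ 3)) ^ j)) * F ^ k) := by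
              rw [Finset.mul_sum, map_sum]
          _ = PowerSeries.coeff (R := Polynomial ℚ) N (G * Phi F N (c' ^ 2 * (-(PowerSeries.X * c' ^ 3)) ^ j)) := by
              rw [Phi_eq_sum]
          _ = PowerSeries.coeff (R := Polynomial ℚ) N (G * ((1 + PowerSeries.X) ^ 2 *
                (-(F * (1 + PowerSeries.X) ^ 3)) ^ j)) :=
              mulcong (fun a _ => rfl) (hSj j) N le_rfl
      -- algebraic simplification of G * Q_j
      have hGQ : ∀ j : ℕ, G * ((1 + PowerSeries.X) ^ 2 *
          (-(F * (1 + PowerSeries.X) ^ 3)) ^ j) =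
          (1 + PowerSeries.C (R := Polynomial ℚ) Polynomial.X * PowerSeries.X +
            PowerSeries.C (R := Polynomial ℚ) Polynomial.X * PowerSeries.X ^ 2) *
            (-(PowerSeries.X * (1 + PowerSeries.X))) ^ j := by
        intro j
        rw [hG, hF]
        calc ((1 + PowerSeries.C (R := Polynomial ℚ) Polynomial.X * PowerSeries.X +
              PowerSeries.C (R := Polynomial ℚ) Polynomial.X * PowerSeries.X ^ 2) * v ^ 2) *
              ((1 + PowerSeries.X) ^ 2 *
                (-(PowerSeries.X * v ^ 2 * (1 + PowerSeries.X) ^ 3)) ^ j)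
            = ((1 + PowerSeries.C (R := Polynomial ℚ) Polynomial.X * PowerSeries.X +
              PowerSeries.C (R := Polynomial ℚ) Polynomial.X * PowerSeries.X ^ 2) *
              ((1 + PowerSeries.X) * v) ^ 2) *
              (-(PowerSeries.X * (1 + PowerSeries.X) * ((1 + PowerSeries.X) * v) ^ 2)) ^ j := by
              ring
          _ = _ := by rw [hv]; ring
      -- now assemble
      calc ∑ k ∈ Finset.range (N + 1), M N k * ν k
          = ∑ k ∈ Finset.range (N + 1), ∑ j ∈ Finset.range (N + 1), M N k *
              (Polynomial.C (PowerSeries.coeff (R := ℚ) k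
                (c ^ 2 * (-(PowerSeries.X * c ^ 3)) ^ j)) * Polynomial.X ^ j) := by
            refine Finset.sum_congr rfl fun k hk => ?_
            rw [hνext k (by simp only [Finset.mem_range] at hk; omega), Finset.mul_sum]
        _ = ∑ j ∈ Finset.range (N + 1), (∑ k ∈ Finset.range (N + 1),
              Polynomial.C (PowerSeries.coeff (R := ℚ) k
                (c ^ 2 * (-(PowerSeries.X * c ^ 3)) ^ j)) * M N k) * Polynomial.X ^ j := by
            rw [Finset.sum_comm]
            refine Finset.sum_congr rfl fun j _ => ?_
            rw [Finset.sum_mul]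
            exact Finset.sum_congr rfl fun k _ => by ring
        _ = ∑ j ∈ Finset.range (N + 1), (PowerSeries.coeff (R := Polynomial ℚ) N
              ((1 + PowerSeries.C (R := Polynomial ℚ) Polynomial.X * PowerSeries.X +
                PowerSeries.C (R := Polynomial ℚ) Polynomial.X * PowerSeries.X ^ 2) *
                (-(PowerSeries.X * (1 + PowerSeries.X))) ^ j)) * Polynomial.X ^ j := by
            refine Finset.sum_congr rfl fun j _ => ?_
            rw [hinner j, hGQ j]
        _ = PowerSeries.coeff (R := Polynomial ℚ) N (∑ j ∈ Finset.range (N + 1),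
              (1 + PowerSeries.C (R := Polynomial ℚ) Polynomial.X * PowerSeries.X +
                PowerSeries.C (R := Polynomial ℚ) Polynomial.X * PowerSeries.X ^ 2) *
              (PowerSeries.C (R := Polynomial ℚ) Polynomial.X * (-(PowerSeries.X * (1 + PowerSeries.X)))) ^ j) := by
            rw [map_sum]
            refine Finset.sum_congr rfl fun j _ => ?_
            rw [show (1 + PowerSeries.C (R := Polynomial ℚ) Polynomial.X * PowerSeries.X +
                PowerSeries.C (R := Polynomial ℚ) Polynomial.X * PowerSeries.X ^ 2) *
              (PowerSeries.C (R := Polynomial ℚ) Polynomial.X * (-(PowerSeries.X * (1 + PowerSeries.X)))) ^ j =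
              PowerSeries.C (R := Polynomial ℚ) (Polynomial.X ^ j) *
                ((1 + PowerSeries.C (R := Polynomial ℚ) Polynomial.X * PowerSeries.X +
                  PowerSeries.C (R := Polynomial ℚ) Polynomial.X * PowerSeries.X ^ 2) *
                  (-(PowerSeries.X * (1 + PowerSeries.X))) ^ j) from by
              rw [mul_pow, map_pow]; ring]
            rw [PowerSeries.coeff_C_mul]
            ring
        _ = PowerSeries.coeff (R := Polynomial ℚ) N (1 - (PowerSeries.C (R := Polynomial ℚ) Polynomial.X *
              (-(PowerSeries.X * (1 + PowerSeries.X)))) ^ (N + 1)) := by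
            congr 1
            have hgs := geom_sum_mul (PowerSeries.C (R := Polynomial ℚ) Polynomial.X *
              (-(PowerSeries.X * (1 + PowerSeries.X)))) (N + 1)
            rw [← Finset.mul_sum]
            linear_combination (-1 : PowerSeries (Polynomial ℚ)) * hgs
        _ = if N = 0 then 1 else 0 := by
            rw [map_sub]
            have h1 : PowerSeries.coeff (R := Polynomial ℚ) N (1 : PowerSeries (Polynomial ℚ)) = 0 := by
              rw [PowerSeries.coeff_one, if_neg (by omega)]
            have h2 : PowerSeries.coeff (R := Polynomial ℚ) N ((PowerSeries.C (R := Polynomial ℚ) Polynomial.X *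
                (-(PowerSeries.X * (1 + PowerSeries.X)))) ^ (N + 1)) = 0 := by
              have hdvd : (PowerSeries.X : PowerSeries (Polynomial ℚ)) ^ (N + 1) ∣
                  (PowerSeries.C (R := Polynomial ℚ) Polynomial.X *
                    (-(PowerSeries.X * (1 + PowerSeries.X)))) ^ (N + 1) := by
                apply pow_dvd_pow_of_dvd
                exact ⟨PowerSeries.C (R := Polynomial ℚ) Polynomial.X * (-(1 + PowerSeries.X)), by ring⟩
              exact PowerSeries.X_pow_dvd_iff.mp hdvd N (Nat.lt_succ_self N)
            rw [h1, h2, if_neg (by omega)]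
            ring
  -- uniqueness by strong induction
  intro n
  induction n using Nat.strong_induction_on with
  | _ n IH =>
    have h := (hμ n).trans (master n).symm
    rw [Finset.sum_range_succ, Finset.sum_range_succ] at h
    have hs : ∑ k ∈ Finset.range n, M n k * μ k = ∑ k ∈ Finset.range n, M n k * ν k :=
      Finset.sum_congr rfl fun k hk => by rw [IH k (Finset.mem_range.mp hk)]
    rw [hs] at h
    have h2 := add_left_cancel h
    rw [hMnn n, one_mul, one_mul] at h2
    exact h2
end

section
/- In (ℚ[y])[[x]] one has the identity (1 - (2-y)·x - (1-y)·x²·c²)·c² = 1 + y·x·c³, where c is the Catalan generating function. Equivalently, the generating function c²/(1 + y·x·c³) of the moments μ_n^{(2)}(y) equals the continued fraction 1/(1 - (2-y)x - (1-y)x²·c²), whose tail c² is the value of the periodic continued fraction 1/(1-2x-x²/(1-2x-x²/(1-2x-··· ))). -/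
open PowerSeries Finset

/-- In `(ℚ[y])[[x]]`: `(1 - (2-y)x - (1-y)x²c²)·c² = 1 + yxc³`, where `c` is the
Catalan generating function; i.e. the moment generating function `c²/(1+yxc³)`
equals the continued fraction `1/(1-(2-y)x-(1-y)x²c²)` with tail `c²`. -/
theorem stmt12 (c : PowerSeries (Polynomial ℚ))
    (hc0 : PowerSeries.constantCoeff c = 1)
    (hc : c = 1 + PowerSeries.X * c ^ 2) :
    (1 - (2 - PowerSeries.C (Polynomial.X : Polynomial ℚ)) * PowerSeries.X -
        (1 - PowerSeries.C (Polynomial.X : Polynomial ℚ)) * PowerSeries.X ^ 2 * c ^ 2) * c ^ 2 =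
      1 + PowerSeries.C (Polynomial.X : Polynomial ℚ) * PowerSeries.X * c ^ 3 := by
  have h : PowerSeries.X * c ^ 2 = c - 1 := by
    linear_combination -hc
  set y := PowerSeries.C (Polynomial.X : Polynomial ℚ)
  linear_combination (-(2 - y) - (1 - y) * (PowerSeries.X * c ^ 2 + c - 1) - y * c) * h
end
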